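/- arXiv:2005.05253 — 5 statements merged into one kernel-verified Lean document; each statement's English description precedes it below -/
import Mathlib

section
/- Let w:[0,1]²→ℝ be a bounded symmetric measurable function, let α>0, and let S_u, S_l, T_l, T_u be measurable subsets of [0,1], each of measure at least α, such that S_u ≤ S_l ≤ T_l ≤ T_u (meaning every element of an earlier set is ≤ every element of a later set). Then Γ(w) ≥ α³ · ( w̄(S_u,T_u) − w̄(S_l,T_l) ), where w̄(S,T) = (1/(|S||T|)) ∫_{S×T} w. -/
open MeasureTheory Set
open scoped ENNReal

/-- `Γ(w, A)`. -/
noncomputable def gammaA (w : ℝ → ℝ → ℝ) (A : Set ℝ) : ℝ :=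
  ∫ y in Icc (0:ℝ) 1, ∫ z in Icc (0:ℝ) 1,
    if y < z then
      max (∫ x in A ∩ Icc 0 y, (w x z - w x y)) 0
        + max (∫ x in A ∩ Icc z 1, (w x y - w x z)) 0
    else 0

/-- `Γ(w) = sup { Γ(w,A) : A ⊆ [0,1] measurable }`. -/
noncomputable def Gamma (w : ℝ → ℝ → ℝ) : ℝ :=
  sSup {r : ℝ | ∃ A : Set ℝ, MeasurableSet A ∧ A ⊆ Icc 0 1 ∧ r = gammaA w A}

/-- The average value `w̄(S,T)` of `w` over `S × T`. -/
noncomputable def avgOn (w : ℝ → ℝ → ℝ) (S T : Set ℝ) : ℝ :=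
  (∫ x in S, ∫ y in T, w x y) / ((volume S).toReal * (volume T).toReal)

section helpers

variable {w : ℝ → ℝ → ℝ} {C : ℝ}

lemma vol_lt_top {X : Set ℝ} (hX1 : X ⊆ Icc 0 1) : volume X < ⊤ :=
  lt_of_le_of_lt (measure_mono hX1) (by simp [Real.volume_Icc])

lemma restrict_finite {X : Set ℝ} (hX1 : X ⊆ Icc 0 1) :
    IsFiniteMeasure (volume.restrict X) := by
  constructor
  rw [Measure.restrict_apply_univ]
  exact vol_lt_top hX1

lemma vol_le_one {X : Set ℝ} (hX1 : X ⊆ Icc 0 1) : (volume X).toReal ≤ 1 := by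
  have h1 : volume X ≤ 1 := by
    have := measure_mono (μ := volume) hX1
    simpa [Real.volume_Icc] using this
  calc (volume X).toReal ≤ (1 : ℝ≥0∞).toReal := ENNReal.toReal_mono (by simp) h1
    _ = 1 := by simp

-- integrability of a slice x ↦ w x t on a set X
lemma intOn (hmeas : Measurable (Function.uncurry w))
    (hbdd : ∀ x y : ℝ, x ∈ Icc (0:ℝ) 1 → y ∈ Icc (0:ℝ) 1 → |w x y| ≤ C)
    {X : Set ℝ} (hX : MeasurableSet X) (hX1 : X ⊆ Icc 0 1) {t : ℝ} (ht : t ∈ Icc (0:ℝ) 1) :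
    IntegrableOn (fun x => w x t) X volume := by
  haveI := restrict_finite hX1
  refine ⟨(hmeas.comp (measurable_id.prodMk measurable_const)).aestronglyMeasurable, ?_⟩
  refine HasFiniteIntegral.of_bounded (C := C) ?_
  refine (ae_restrict_iff' hX).mpr (ae_of_all _ fun x hx => ?_)
  simpa [Real.norm_eq_abs] using hbdd x t (hX1 hx) ht

lemma gSM (hmeas : Measurable (Function.uncurry w)) (X : Set ℝ) :
    StronglyMeasurable (fun t => ∫ x in X, w x t) :=
  hmeas.stronglyMeasurable.integral_prod_left

lemma gBdd (hmeas : Measurable (Function.uncurry w))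
    (hbdd : ∀ x y : ℝ, x ∈ Icc (0:ℝ) 1 → y ∈ Icc (0:ℝ) 1 → |w x y| ≤ C)
    {X : Set ℝ} (hX : MeasurableSet X) (hX1 : X ⊆ Icc 0 1) {t : ℝ} (ht : t ∈ Icc (0:ℝ) 1) :
    ‖∫ x in X, w x t‖ ≤ C := by
  have hC0 : 0 ≤ C := le_trans (abs_nonneg _) (hbdd 0 0 (by simp) (by simp))
  calc ‖∫ x in X, w x t‖ ≤ C * (volume X).toReal := by
        refine norm_setIntegral_le_of_norm_le_const (vol_lt_top hX1) fun x hx => ?_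
        simpa [Real.norm_eq_abs] using hbdd x t (hX1 hx) ht
    _ ≤ C * 1 := by
        exact mul_le_mul_of_nonneg_left (vol_le_one hX1) hC0
    _ = C := mul_one C

-- integrability of t ↦ ∫ x in X, w x t on a set Y
lemma intOnG (hmeas : Measurable (Function.uncurry w))
    (hbdd : ∀ x y : ℝ, x ∈ Icc (0:ℝ) 1 → y ∈ Icc (0:ℝ) 1 → |w x y| ≤ C)
    {X Y : Set ℝ} (hX : MeasurableSet X) (hX1 : X ⊆ Icc 0 1)
    (hY : MeasurableSet Y) (hY1 : Y ⊆ Icc 0 1) :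
    IntegrableOn (fun t => ∫ x in X, w x t) Y volume := by
  haveI := restrict_finite hY1
  refine ⟨(gSM hmeas X).aestronglyMeasurable, HasFiniteIntegral.of_bounded (C := C) ?_⟩
  exact (ae_restrict_iff' hY).mpr (ae_of_all _ fun t htY => gBdd hmeas hbdd hX hX1 (hY1 htY))

end helpers

section measF

variable {w : ℝ → ℝ → ℝ} {C : ℝ}

lemma measF (hmeas : Measurable (Function.uncurry w)) {A : Set ℝ} (hA : MeasurableSet A) :
    Measurable (fun p : ℝ × ℝ =>
      if p.1 < p.2 then
        max (∫ x in A ∩ Icc 0 p.1, (w x p.2 - w x p.1)) 0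
          + max (∫ x in A ∩ Icc p.2 1, (w x p.1 - w x p.2)) 0
      else 0) := by
  have m1 : Measurable (fun p : ℝ × ℝ => ∫ x in A ∩ Icc 0 p.1, (w x p.2 - w x p.1)) := by
    have key : ∀ p : ℝ × ℝ, (∫ x in A ∩ Icc 0 p.1, (w x p.2 - w x p.1))
        = ∫ x, ({q : (ℝ × ℝ) × ℝ | q.2 ∈ A ∧ 0 ≤ q.2 ∧ q.2 ≤ q.1.1}.indicator
            (fun q => w q.2 q.1.2 - w q.2 q.1.1)) (p, x) := by
      intro p
      rw [← integral_indicator (hA.inter measurableSet_Icc)]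
      congr 1
    simp only [key]
    apply StronglyMeasurable.measurable
    apply MeasureTheory.StronglyMeasurable.integral_prod_right'
      (f := ({q : (ℝ × ℝ) × ℝ | q.2 ∈ A ∧ 0 ≤ q.2 ∧ q.2 ≤ q.1.1}.indicator
            (fun q => w q.2 q.1.2 - w q.2 q.1.1)))
    apply Measurable.stronglyMeasurable
    apply Measurable.indicator
    · exact (hmeas.comp (measurable_snd.prodMk (measurable_fst.snd))).sub
        (hmeas.comp (measurable_snd.prodMk (measurable_fst.fst)))
    · have : {q : (ℝ × ℝ) × ℝ | q.2 ∈ A ∧ 0 ≤ q.2 ∧ q.2 ≤ q.1.1}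
          = (Prod.snd ⁻¹' A) ∩ ({q : (ℝ × ℝ) × ℝ | (0:ℝ) ≤ q.2} ∩ {q : (ℝ × ℝ) × ℝ | q.2 ≤ q.1.1}) := by
        ext q; simp [Set.mem_setOf_eq, and_assoc]
      rw [this]
      exact (hA.preimage measurable_snd).inter
        ((measurableSet_le measurable_const measurable_snd).inter
          (measurableSet_le measurable_snd (measurable_fst.fst)))
  have m2 : Measurable (fun p : ℝ × ℝ => ∫ x in A ∩ Icc p.2 1, (w x p.1 - w x p.2)) := by
    have key : ∀ p : ℝ × ℝ, (∫ x in A ∩ Icc p.2 1, (w x p.1 - w x p.2))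
        = ∫ x, ({q : (ℝ × ℝ) × ℝ | q.2 ∈ A ∧ q.1.2 ≤ q.2 ∧ q.2 ≤ 1}.indicator
            (fun q => w q.2 q.1.1 - w q.2 q.1.2)) (p, x) := by
      intro p
      rw [← integral_indicator (hA.inter measurableSet_Icc)]
      congr 1
    simp only [key]
    apply StronglyMeasurable.measurable
    apply MeasureTheory.StronglyMeasurable.integral_prod_right'
      (f := ({q : (ℝ × ℝ) × ℝ | q.2 ∈ A ∧ q.1.2 ≤ q.2 ∧ q.2 ≤ 1}.indicator
            (fun q => w q.2 q.1.1 - w q.2 q.1.2)))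
    apply Measurable.stronglyMeasurable
    apply Measurable.indicator
    · exact (hmeas.comp (measurable_snd.prodMk (measurable_fst.fst))).sub
        (hmeas.comp (measurable_snd.prodMk (measurable_fst.snd)))
    · have : {q : (ℝ × ℝ) × ℝ | q.2 ∈ A ∧ q.1.2 ≤ q.2 ∧ q.2 ≤ 1}
          = (Prod.snd ⁻¹' A) ∩ ({q : (ℝ × ℝ) × ℝ | q.1.2 ≤ q.2} ∩ {q : (ℝ × ℝ) × ℝ | q.2 ≤ (1:ℝ)}) := by
        ext q; simp [Set.mem_setOf_eq, and_assoc]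
      rw [this]
      exact (hA.preimage measurable_snd).inter
        ((measurableSet_le (measurable_fst.snd) measurable_snd).inter
          (measurableSet_le measurable_snd measurable_const))
  exact Measurable.ite (measurableSet_lt measurable_fst measurable_snd)
    ((m1.max measurable_const).add (m2.max measurable_const)) measurable_const

end measF

section region

variable {w : ℝ → ℝ → ℝ} {C : ℝ}

lemma diffBdd (hmeas : Measurable (Function.uncurry w))
    (hbdd : ∀ x y : ℝ, x ∈ Icc (0:ℝ) 1 → y ∈ Icc (0:ℝ) 1 → |w x y| ≤ C)
    {X : Set ℝ} (hX : MeasurableSet X) (hX1 : X ⊆ Icc 0 1) {s t : ℝ}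
    (hs : s ∈ Icc (0:ℝ) 1) (ht : t ∈ Icc (0:ℝ) 1) :
    |∫ x in X, (w x s - w x t)| ≤ 2 * C := by
  have hC0 : 0 ≤ C := le_trans (abs_nonneg _) (hbdd 0 0 (by simp) (by simp))
  have h := norm_setIntegral_le_of_norm_le_const (μ := volume)
      (f := fun x => w x s - w x t) (C := 2 * C) (vol_lt_top hX1) ?_
  · rw [Real.norm_eq_abs] at h
    calc |∫ x in X, (w x s - w x t)| ≤ 2 * C * (volume X).toReal := h
      _ ≤ 2 * C * 1 := by
          exact mul_le_mul_of_nonneg_left (vol_le_one hX1) (by linarith)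
      _ = 2 * C := mul_one _
  · intro x hx
    rw [Real.norm_eq_abs]
    calc |w x s - w x t| ≤ |w x s| + |w x t| := abs_sub _ _
      _ ≤ C + C := add_le_add (hbdd x s (hX1 hx) hs) (hbdd x t (hX1 hx) ht)
      _ = 2 * C := by ring

lemma region1 (hmeas : Measurable (Function.uncurry w))
    (hbdd : ∀ x y : ℝ, x ∈ Icc (0:ℝ) 1 → y ∈ Icc (0:ℝ) 1 → |w x y| ≤ C)
    {A B Cs : Set ℝ}
    (hA : MeasurableSet A) (hB : MeasurableSet B) (hC : MeasurableSet Cs)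
    (hA1 : A ⊆ Icc 0 1) (hB1 : B ⊆ Icc 0 1) (hC1 : Cs ⊆ Icc 0 1)
    (hAB : ∀ x ∈ A, ∀ y ∈ B, x ≤ y) (hBC : ∀ y ∈ B, ∀ z ∈ Cs, y ≤ z) :
    (volume B).toReal * (∫ z in Cs, ∫ x in A, w x z)
      - (volume Cs).toReal * (∫ y in B, ∫ x in A, w x y) ≤ gammaA w A := by
  have hC0 : 0 ≤ C := le_trans (abs_nonneg _) (hbdd 0 0 (by simp) (by simp))
  have hVicc : (volume (Icc (0:ℝ) 1)).toReal = 1 := by simp [Real.volume_Icc]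
  set F : ℝ × ℝ → ℝ := fun p =>
      if p.1 < p.2 then
        max (∫ x in A ∩ Icc 0 p.1, (w x p.2 - w x p.1)) 0
          + max (∫ x in A ∩ Icc p.2 1, (w x p.1 - w x p.2)) 0
      else 0 with hFdef
  have gamma_eq : gammaA w A = ∫ y in Icc (0:ℝ) 1, ∫ z in Icc (0:ℝ) 1, F (y, z) := rfl
  have hFm : Measurable F := measF hmeas hA
  have hF0 : ∀ p, 0 ≤ F p := by
    intro p
    rw [hFdef]
    dsimp only
    split
    · exact add_nonneg (le_max_right _ _) (le_max_right _ _)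
    · exact le_refl 0
  have hFb : ∀ p : ℝ × ℝ, p.1 ∈ Icc (0:ℝ) 1 → p.2 ∈ Icc (0:ℝ) 1 → ‖F p‖ ≤ 4 * C := by
    intro p hp1 hp2
    rw [Real.norm_eq_abs, abs_of_nonneg (hF0 p), hFdef]
    dsimp only
    split
    · have h1 : max (∫ x in A ∩ Icc 0 p.1, (w x p.2 - w x p.1)) 0 ≤ 2 * C := by
        refine max_le ?_ (by linarith)
        exact le_trans (le_abs_self _)
          (diffBdd hmeas hbdd (hA.inter measurableSet_Icc)
            (subset_trans Set.inter_subset_left hA1) hp2 hp1)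
      have h2 : max (∫ x in A ∩ Icc p.2 1, (w x p.1 - w x p.2)) 0 ≤ 2 * C := by
        refine max_le ?_ (by linarith)
        exact le_trans (le_abs_self _)
          (diffBdd hmeas hbdd (hA.inter measurableSet_Icc)
            (subset_trans Set.inter_subset_left hA1) hp1 hp2)
      linarith
    · linarith
  -- integrability of the inner integral function on [0,1]
  haveI : IsFiniteMeasure (volume.restrict (Icc (0:ℝ) 1)) := restrict_finite subset_rfl
  have hGb : ∀ y ∈ Icc (0:ℝ) 1, ‖∫ z in Icc (0:ℝ) 1, F (y, z)‖ ≤ 4 * C := by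
    intro y hy
    calc ‖∫ z in Icc (0:ℝ) 1, F (y, z)‖ ≤ 4 * C * (volume (Icc (0:ℝ) 1)).toReal := by
          refine norm_setIntegral_le_of_norm_le_const (by simp [Real.volume_Icc])
            fun z hz => hFb (y, z) hy hz
      _ = 4 * C := by rw [hVicc, mul_one]
  have hGm : StronglyMeasurable (fun y => ∫ z in Icc (0:ℝ) 1, F (y, z)) :=
    hFm.stronglyMeasurable.integral_prod_right'
  have hGint : IntegrableOn (fun y => ∫ z in Icc (0:ℝ) 1, F (y, z)) (Icc (0:ℝ) 1) volume := by
    refine ⟨hGm.aestronglyMeasurable, HasFiniteIntegral.of_bounded (C := 4 * C) ?_⟩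
    exact (ae_restrict_iff' measurableSet_Icc).mpr (ae_of_all _ hGb)
  have step1 : (∫ y in B, ∫ z in Icc (0:ℝ) 1, F (y, z)) ≤ gammaA w A := by
    rw [gamma_eq]
    exact setIntegral_mono_set hGint
      (ae_of_all _ fun y => integral_nonneg fun z => hF0 _)
      (HasSubset.Subset.eventuallyLE hB1)
  set g : ℝ → ℝ := fun t => ∫ x in A, w x t with hgdef
  have step2 : ∀ y ∈ B, (∫ z in Cs, (g z - g y)) ≤ ∫ z in Icc (0:ℝ) 1, F (y, z) := by
    intro y hy
    have hyI : y ∈ Icc (0:ℝ) 1 := hB1 hy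
    have hFyint : IntegrableOn (fun z => F (y, z)) (Icc (0:ℝ) 1) volume := by
      refine ⟨((hFm.comp (measurable_const.prodMk measurable_id)).stronglyMeasurable).aestronglyMeasurable,
        HasFiniteIntegral.of_bounded (C := 4 * C) ?_⟩
      exact (ae_restrict_iff' measurableSet_Icc).mpr
        (ae_of_all _ fun z hz => hFb (y, z) hyI hz)
    have hmono : (∫ z in Cs, F (y, z)) ≤ ∫ z in Icc (0:ℝ) 1, F (y, z) :=
      setIntegral_mono_set hFyint (ae_of_all _ fun z => hF0 _)
        (HasSubset.Subset.eventuallyLE hC1)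
    refine le_trans ?_ hmono
    have hgC : IntegrableOn (fun z => g z - g y) Cs volume := by
      refine Integrable.sub (intOnG hmeas hbdd hA hA1 hC hC1) ?_
      exact (integrableOn_const_iff).mpr (Or.inr (vol_lt_top hC1))
    refine integral_mono_ae hgC (hFyint.mono_set hC1) ?_
    have hsing : (volume.restrict Cs) {y} = 0 := by
      rw [Measure.restrict_apply (measurableSet_singleton y)]
      exact measure_mono_null Set.inter_subset_left (measure_singleton y)
    have hne : ∀ᵐ (z : ℝ) ∂(volume.restrict Cs), z ≠ y := by
      rw [ae_iff]
      convert hsing using 2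
      ext z; simp
    filter_upwards [hne, ae_restrict_mem hC] with z hz hzC
    have hyz : y < z := lt_of_le_of_ne (hBC y hy z hzC) (Ne.symm hz)
    have hAcap : A ∩ Icc 0 y = A := by
      refine Set.inter_eq_left.mpr fun x hx => ?_
      exact ⟨(hA1 hx).1, hAB x hx y hy⟩
    have hFval : F (y, z) = max (∫ x in A, (w x z - w x y)) 0
        + max (∫ x in A ∩ Icc z 1, (w x y - w x z)) 0 := by
      rw [hFdef]
      dsimp only
      rw [if_pos hyz, hAcap]
    rw [hFval]
    have hsub : (∫ x in A, (w x z - w x y)) = g z - g y :=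
      integral_sub (intOn hmeas hbdd hA hA1 (hC1 hzC)) (intOn hmeas hbdd hA hA1 hyI)
    calc g z - g y = ∫ x in A, (w x z - w x y) := hsub.symm
      _ ≤ max (∫ x in A, (w x z - w x y)) 0 := le_max_left _ _
      _ ≤ _ := le_add_of_nonneg_right (le_max_right _ _)
  -- rewrite inner integral over Cs
  have hgint_Cs : IntegrableOn g Cs volume := intOnG hmeas hbdd hA hA1 hC hC1
  have hgint_B : IntegrableOn g B volume := intOnG hmeas hbdd hA hA1 hB hB1
  have inner_eq : ∀ y : ℝ, (∫ z in Cs, (g z - g y))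
      = (∫ z in Cs, g z) - (volume Cs).toReal * g y := by
    intro y
    rw [integral_sub hgint_Cs ((integrableOn_const_iff).mpr (Or.inr (vol_lt_top hC1)))]
    rw [setIntegral_const, smul_eq_mul, measureReal_def]
  have hKint : IntegrableOn (fun y => (∫ z in Cs, (g z - g y))) B volume := by
    simp only [inner_eq]
    refine Integrable.sub ?_ (hgint_B.const_mul _)
    exact (integrableOn_const_iff).mpr (Or.inr (vol_lt_top hB1))
  have step3 : (∫ y in B, ∫ z in Cs, (g z - g y))
      ≤ ∫ y in B, ∫ z in Icc (0:ℝ) 1, F (y, z) :=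
    setIntegral_mono_on hKint (hGint.mono_set hB1) hB step2
  have hcalc : (∫ y in B, ∫ z in Cs, (g z - g y))
      = (volume B).toReal * (∫ z in Cs, g z) - (volume Cs).toReal * (∫ y in B, g y) := by
    simp only [inner_eq]
    rw [integral_sub ((integrableOn_const_iff (C := ∫ z in Cs, g z)).mpr (Or.inr (vol_lt_top hB1)))
      (hgint_B.const_mul _)]
    rw [setIntegral_const, smul_eq_mul, measureReal_def, integral_const_mul]
  calc (volume B).toReal * (∫ z in Cs, ∫ x in A, w x z)
      - (volume Cs).toReal * (∫ y in B, ∫ x in A, w x y)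
      = ∫ y in B, ∫ z in Cs, (g z - g y) := hcalc.symm
    _ ≤ ∫ y in B, ∫ z in Icc (0:ℝ) 1, F (y, z) := step3
    _ ≤ gammaA w A := step1

end region

section region2sec

variable {w : ℝ → ℝ → ℝ} {C : ℝ}

lemma region2 (hmeas : Measurable (Function.uncurry w))
    (hbdd : ∀ x y : ℝ, x ∈ Icc (0:ℝ) 1 → y ∈ Icc (0:ℝ) 1 → |w x y| ≤ C)
    {A B Cs : Set ℝ}
    (hA : MeasurableSet A) (hB : MeasurableSet B) (hC : MeasurableSet Cs)
    (hA1 : A ⊆ Icc 0 1) (hB1 : B ⊆ Icc 0 1) (hC1 : Cs ⊆ Icc 0 1)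
    (hBC : ∀ y ∈ B, ∀ z ∈ Cs, y ≤ z) (hCA : ∀ z ∈ Cs, ∀ x ∈ A, z ≤ x) :
    (volume Cs).toReal * (∫ y in B, ∫ x in A, w x y)
      - (volume B).toReal * (∫ z in Cs, ∫ x in A, w x z) ≤ gammaA w A := by
  have hC0 : 0 ≤ C := le_trans (abs_nonneg _) (hbdd 0 0 (by simp) (by simp))
  have hVicc : (volume (Icc (0:ℝ) 1)).toReal = 1 := by simp [Real.volume_Icc]
  set F : ℝ × ℝ → ℝ := fun p =>
      if p.1 < p.2 then
        max (∫ x in A ∩ Icc 0 p.1, (w x p.2 - w x p.1)) 0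
          + max (∫ x in A ∩ Icc p.2 1, (w x p.1 - w x p.2)) 0
      else 0 with hFdef
  have gamma_eq : gammaA w A = ∫ y in Icc (0:ℝ) 1, ∫ z in Icc (0:ℝ) 1, F (y, z) := rfl
  have hFm : Measurable F := measF hmeas hA
  have hF0 : ∀ p, 0 ≤ F p := by
    intro p
    rw [hFdef]
    dsimp only
    split
    · exact add_nonneg (le_max_right _ _) (le_max_right _ _)
    · exact le_refl 0
  have hFb : ∀ p : ℝ × ℝ, p.1 ∈ Icc (0:ℝ) 1 → p.2 ∈ Icc (0:ℝ) 1 → ‖F p‖ ≤ 4 * C := by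
    intro p hp1 hp2
    rw [Real.norm_eq_abs, abs_of_nonneg (hF0 p), hFdef]
    dsimp only
    split
    · have h1 : max (∫ x in A ∩ Icc 0 p.1, (w x p.2 - w x p.1)) 0 ≤ 2 * C := by
        refine max_le ?_ (by linarith)
        exact le_trans (le_abs_self _)
          (diffBdd hmeas hbdd (hA.inter measurableSet_Icc)
            (subset_trans Set.inter_subset_left hA1) hp2 hp1)
      have h2 : max (∫ x in A ∩ Icc p.2 1, (w x p.1 - w x p.2)) 0 ≤ 2 * C := by
        refine max_le ?_ (by linarith)
        exact le_trans (le_abs_self _)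
          (diffBdd hmeas hbdd (hA.inter measurableSet_Icc)
            (subset_trans Set.inter_subset_left hA1) hp1 hp2)
      linarith
    · linarith
  haveI : IsFiniteMeasure (volume.restrict (Icc (0:ℝ) 1)) := restrict_finite subset_rfl
  have hGb : ∀ y ∈ Icc (0:ℝ) 1, ‖∫ z in Icc (0:ℝ) 1, F (y, z)‖ ≤ 4 * C := by
    intro y hy
    calc ‖∫ z in Icc (0:ℝ) 1, F (y, z)‖ ≤ 4 * C * (volume (Icc (0:ℝ) 1)).toReal := by
          refine norm_setIntegral_le_of_norm_le_const (by simp [Real.volume_Icc])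
            fun z hz => hFb (y, z) hy hz
      _ = 4 * C := by rw [hVicc, mul_one]
  have hGm : StronglyMeasurable (fun y => ∫ z in Icc (0:ℝ) 1, F (y, z)) :=
    hFm.stronglyMeasurable.integral_prod_right'
  have hGint : IntegrableOn (fun y => ∫ z in Icc (0:ℝ) 1, F (y, z)) (Icc (0:ℝ) 1) volume := by
    refine ⟨hGm.aestronglyMeasurable, HasFiniteIntegral.of_bounded (C := 4 * C) ?_⟩
    exact (ae_restrict_iff' measurableSet_Icc).mpr (ae_of_all _ hGb)
  have step1 : (∫ y in B, ∫ z in Icc (0:ℝ) 1, F (y, z)) ≤ gammaA w A := by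
    rw [gamma_eq]
    exact setIntegral_mono_set hGint
      (ae_of_all _ fun y => integral_nonneg fun z => hF0 _)
      (HasSubset.Subset.eventuallyLE hB1)
  set g : ℝ → ℝ := fun t => ∫ x in A, w x t with hgdef
  have step2 : ∀ y ∈ B, (∫ z in Cs, (g y - g z)) ≤ ∫ z in Icc (0:ℝ) 1, F (y, z) := by
    intro y hy
    have hyI : y ∈ Icc (0:ℝ) 1 := hB1 hy
    have hFyint : IntegrableOn (fun z => F (y, z)) (Icc (0:ℝ) 1) volume := by
      refine ⟨((hFm.comp (measurable_const.prodMk measurable_id)).stronglyMeasurable).aestronglyMeasurable,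
        HasFiniteIntegral.of_bounded (C := 4 * C) ?_⟩
      exact (ae_restrict_iff' measurableSet_Icc).mpr
        (ae_of_all _ fun z hz => hFb (y, z) hyI hz)
    have hmono : (∫ z in Cs, F (y, z)) ≤ ∫ z in Icc (0:ℝ) 1, F (y, z) :=
      setIntegral_mono_set hFyint (ae_of_all _ fun z => hF0 _)
        (HasSubset.Subset.eventuallyLE hC1)
    refine le_trans ?_ hmono
    have hgC : IntegrableOn (fun z => g y - g z) Cs volume := by
      refine Integrable.sub ?_ (intOnG hmeas hbdd hA hA1 hC hC1)
      exact (integrableOn_const_iff).mpr (Or.inr (vol_lt_top hC1))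
    refine integral_mono_ae hgC (hFyint.mono_set hC1) ?_
    have hsing : (volume.restrict Cs) {y} = 0 := by
      rw [Measure.restrict_apply (measurableSet_singleton y)]
      exact measure_mono_null Set.inter_subset_left (measure_singleton y)
    have hne : ∀ᵐ (z : ℝ) ∂(volume.restrict Cs), z ≠ y := by
      rw [ae_iff]
      convert hsing using 2
      ext z; simp
    filter_upwards [hne, ae_restrict_mem hC] with z hz hzC
    have hyz : y < z := lt_of_le_of_ne (hBC y hy z hzC) (Ne.symm hz)
    have hAcap : A ∩ Icc z 1 = A := by
      refine Set.inter_eq_left.mpr fun x hx => ?_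
      exact ⟨hCA z hzC x hx, (hA1 hx).2⟩
    have hFval : F (y, z) = max (∫ x in A ∩ Icc 0 y, (w x z - w x y)) 0
        + max (∫ x in A, (w x y - w x z)) 0 := by
      rw [hFdef]
      dsimp only
      rw [if_pos hyz, hAcap]
    rw [hFval]
    have hsub : (∫ x in A, (w x y - w x z)) = g y - g z :=
      integral_sub (intOn hmeas hbdd hA hA1 hyI) (intOn hmeas hbdd hA hA1 (hC1 hzC))
    calc g y - g z = ∫ x in A, (w x y - w x z) := hsub.symm
      _ ≤ max (∫ x in A, (w x y - w x z)) 0 := le_max_left _ _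
      _ ≤ _ := le_add_of_nonneg_left (le_max_right _ _)
  have hgint_Cs : IntegrableOn g Cs volume := intOnG hmeas hbdd hA hA1 hC hC1
  have hgint_B : IntegrableOn g B volume := intOnG hmeas hbdd hA hA1 hB hB1
  have inner_eq : ∀ y : ℝ, (∫ z in Cs, (g y - g z))
      = (volume Cs).toReal * g y - (∫ z in Cs, g z) := by
    intro y
    rw [integral_sub ((integrableOn_const_iff (C := g y)).mpr (Or.inr (vol_lt_top hC1))) hgint_Cs]
    rw [setIntegral_const, smul_eq_mul, measureReal_def]
  have hKint : IntegrableOn (fun y => (∫ z in Cs, (g y - g z))) B volume := by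
    simp only [inner_eq]
    refine Integrable.sub (hgint_B.const_mul _) ?_
    exact (integrableOn_const_iff).mpr (Or.inr (vol_lt_top hB1))
  have step3 : (∫ y in B, ∫ z in Cs, (g y - g z))
      ≤ ∫ y in B, ∫ z in Icc (0:ℝ) 1, F (y, z) :=
    setIntegral_mono_on hKint (hGint.mono_set hB1) hB step2
  have hcalc : (∫ y in B, ∫ z in Cs, (g y - g z))
      = (volume Cs).toReal * (∫ y in B, g y) - (volume B).toReal * (∫ z in Cs, g z) := by
    simp only [inner_eq]
    rw [integral_sub (hgint_B.const_mul _)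
      ((integrableOn_const_iff).mpr (Or.inr (vol_lt_top hB1)))]
    rw [setIntegral_const, smul_eq_mul, measureReal_def, integral_const_mul]
  calc (volume Cs).toReal * (∫ y in B, ∫ x in A, w x y)
      - (volume B).toReal * (∫ z in Cs, ∫ x in A, w x z)
      = ∫ y in B, ∫ z in Cs, (g y - g z) := hcalc.symm
    _ ≤ ∫ y in B, ∫ z in Icc (0:ℝ) 1, F (y, z) := step3
    _ ≤ gammaA w A := step1

end region2sec

section sup

variable {w : ℝ → ℝ → ℝ} {C : ℝ}

lemma gammaA_le_bound (hmeas : Measurable (Function.uncurry w))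
    (hbdd : ∀ x y : ℝ, x ∈ Icc (0:ℝ) 1 → y ∈ Icc (0:ℝ) 1 → |w x y| ≤ C)
    {A : Set ℝ} (hA : MeasurableSet A) (hA1 : A ⊆ Icc 0 1) :
    gammaA w A ≤ 4 * C := by
  have hC0 : 0 ≤ C := le_trans (abs_nonneg _) (hbdd 0 0 (by simp) (by simp))
  have hVicc : (volume (Icc (0:ℝ) 1)).toReal = 1 := by simp [Real.volume_Icc]
  set F : ℝ × ℝ → ℝ := fun p =>
      if p.1 < p.2 then
        max (∫ x in A ∩ Icc 0 p.1, (w x p.2 - w x p.1)) 0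
          + max (∫ x in A ∩ Icc p.2 1, (w x p.1 - w x p.2)) 0
      else 0 with hFdef
  have gamma_eq : gammaA w A = ∫ y in Icc (0:ℝ) 1, ∫ z in Icc (0:ℝ) 1, F (y, z) := rfl
  have hF0 : ∀ p, 0 ≤ F p := by
    intro p
    rw [hFdef]
    dsimp only
    split
    · exact add_nonneg (le_max_right _ _) (le_max_right _ _)
    · exact le_refl 0
  have hFb : ∀ p : ℝ × ℝ, p.1 ∈ Icc (0:ℝ) 1 → p.2 ∈ Icc (0:ℝ) 1 → ‖F p‖ ≤ 4 * C := by
    intro p hp1 hp2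
    rw [Real.norm_eq_abs, abs_of_nonneg (hF0 p), hFdef]
    dsimp only
    split
    · have h1 : max (∫ x in A ∩ Icc 0 p.1, (w x p.2 - w x p.1)) 0 ≤ 2 * C := by
        refine max_le ?_ (by linarith)
        exact le_trans (le_abs_self _)
          (diffBdd hmeas hbdd (hA.inter measurableSet_Icc)
            (subset_trans Set.inter_subset_left hA1) hp2 hp1)
      have h2 : max (∫ x in A ∩ Icc p.2 1, (w x p.1 - w x p.2)) 0 ≤ 2 * C := by
        refine max_le ?_ (by linarith)
        exact le_trans (le_abs_self _)
          (diffBdd hmeas hbdd (hA.inter measurableSet_Icc)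
            (subset_trans Set.inter_subset_left hA1) hp1 hp2)
      linarith
    · linarith
  have hGb : ∀ y ∈ Icc (0:ℝ) 1, ‖∫ z in Icc (0:ℝ) 1, F (y, z)‖ ≤ 4 * C := by
    intro y hy
    calc ‖∫ z in Icc (0:ℝ) 1, F (y, z)‖ ≤ 4 * C * (volume (Icc (0:ℝ) 1)).toReal := by
          refine norm_setIntegral_le_of_norm_le_const (by simp [Real.volume_Icc])
            fun z hz => hFb (y, z) hy hz
      _ = 4 * C := by rw [hVicc, mul_one]
  rw [gamma_eq]
  calc (∫ y in Icc (0:ℝ) 1, ∫ z in Icc (0:ℝ) 1, F (y, z))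
      ≤ ‖∫ y in Icc (0:ℝ) 1, ∫ z in Icc (0:ℝ) 1, F (y, z)‖ := le_abs_self _
    _ ≤ 4 * C * (volume (Icc (0:ℝ) 1)).toReal := by
        refine norm_setIntegral_le_of_norm_le_const (by simp [Real.volume_Icc])
          fun y hy => hGb y hy
    _ = 4 * C := by rw [hVicc, mul_one]

lemma gammaA_empty (w : ℝ → ℝ → ℝ) : gammaA w ∅ = 0 := by
  simp [gammaA]

lemma bddA (hmeas : Measurable (Function.uncurry w))
    (hbdd : ∀ x y : ℝ, x ∈ Icc (0:ℝ) 1 → y ∈ Icc (0:ℝ) 1 → |w x y| ≤ C) :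
    BddAbove {r : ℝ | ∃ A : Set ℝ, MeasurableSet A ∧ A ⊆ Icc 0 1 ∧ r = gammaA w A} := by
  refine ⟨4 * C, ?_⟩
  rintro r ⟨A, hA, hA1, rfl⟩
  exact gammaA_le_bound hmeas hbdd hA hA1

lemma le_Gamma (hmeas : Measurable (Function.uncurry w))
    (hbdd : ∀ x y : ℝ, x ∈ Icc (0:ℝ) 1 → y ∈ Icc (0:ℝ) 1 → |w x y| ≤ C)
    {A : Set ℝ} (hA : MeasurableSet A) (hA1 : A ⊆ Icc 0 1) :
    gammaA w A ≤ Gamma w :=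
  le_csSup (bddA hmeas hbdd) ⟨A, hA, hA1, rfl⟩

lemma Gamma_nonneg (hmeas : Measurable (Function.uncurry w))
    (hbdd : ∀ x y : ℝ, x ∈ Icc (0:ℝ) 1 → y ∈ Icc (0:ℝ) 1 → |w x y| ≤ C) :
    0 ≤ Gamma w := by
  have h := le_Gamma hmeas hbdd MeasurableSet.empty (empty_subset _)
  rwa [gammaA_empty] at h

lemma swapJ (hmeas : Measurable (Function.uncurry w))
    (hbdd : ∀ x y : ℝ, x ∈ Icc (0:ℝ) 1 → y ∈ Icc (0:ℝ) 1 → |w x y| ≤ C)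
    {X Y : Set ℝ} (hX : MeasurableSet X) (hY : MeasurableSet Y)
    (hX1 : X ⊆ Icc 0 1) (hY1 : Y ⊆ Icc 0 1) :
    (∫ x in X, ∫ y in Y, w x y) = ∫ y in Y, ∫ x in X, w x y := by
  apply integral_integral_swap
  haveI : IsFiniteMeasure ((volume : Measure ℝ).restrict X) := restrict_finite hX1
  haveI : IsFiniteMeasure ((volume : Measure ℝ).restrict Y) := restrict_finite hY1
  refine ⟨hmeas.aestronglyMeasurable, ?_⟩
  refine HasFiniteIntegral.of_bounded (C := C) ?_
  rw [Measure.prod_restrict]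
  refine (ae_restrict_iff' (hX.prod hY)).mpr (ae_of_all _ fun p hp => ?_)
  have h1 : p.1 ∈ X := hp.1
  have h2 : p.2 ∈ Y := hp.2
  simpa [Function.uncurry, Real.norm_eq_abs] using hbdd p.1 p.2 (hX1 h1) (hY1 h2)

lemma symmJ (hmeas : Measurable (Function.uncurry w))
    (hsymm : ∀ x y, w x y = w y x)
    (hbdd : ∀ x y : ℝ, x ∈ Icc (0:ℝ) 1 → y ∈ Icc (0:ℝ) 1 → |w x y| ≤ C)
    {X Y : Set ℝ} (hX : MeasurableSet X) (hY : MeasurableSet Y)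
    (hX1 : X ⊆ Icc 0 1) (hY1 : Y ⊆ Icc 0 1) :
    (∫ x in X, ∫ y in Y, w x y) = ∫ x in Y, ∫ y in X, w x y := by
  rw [swapJ hmeas hbdd hX hY hX1 hY1]
  refine integral_congr_ae (ae_of_all _ fun t => ?_)
  refine integral_congr_ae (ae_of_all _ fun x => ?_)
  exact hsymm x t

end sup

lemma cube_le {α a b c : ℝ} (hα : 0 < α) (ha : α ≤ a) (hb : α ≤ b) (hc : α ≤ c) :
    α ^ 3 ≤ a * b * c := by
  have h1 : α * α ≤ b * c := mul_le_mul hb hc hα.le (by linarith)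
  have h2 : α * (α * α) ≤ a * (b * c) :=
    mul_le_mul ha h1 (by positivity) (by linarith)
  nlinarith [h2]

lemma final_alg {α su sl tl tu G c' p' : ℝ}
    (hα : 0 < α) (hsu : α ≤ su) (hsl : α ≤ sl) (htl : α ≤ tl) (htu : α ≤ tu)
    (h0 : 0 ≤ G)
    (hA : su * sl * tu * c' ≤ G)
    (hB : -(sl * tl * tu * p') ≤ G)
    (hC : su * tu * sl * (tl + tu) * c' - sl * tl * tu * (su + sl) * p' ≤ (sl + tu) * G) :
    α ^ 3 * (c' - p') ≤ G := by
  have hsu0 : 0 < su := lt_of_lt_of_le hα hsu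
  have hsl0 : 0 < sl := lt_of_lt_of_le hα hsl
  have htl0 : 0 < tl := lt_of_lt_of_le hα htl
  have htu0 : 0 < tu := lt_of_lt_of_le hα htu
  rcases le_or_gt 0 c' with hc | hc <;> rcases le_or_gt p' 0 with hp | hp
  · -- c' ≥ 0, p' ≤ 0 : use hC
    have c1 : α ^ 3 ≤ su * tu * tl := cube_le hα hsu htu htl
    have c2 : α ^ 3 ≤ su * tu * sl := cube_le hα hsu htu hsl
    have c3 : α ^ 3 ≤ tl * tu * su := cube_le hα htl htu hsu
    have c4 : α ^ 3 ≤ sl * tl * sl := cube_le hα hsl htl hsl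
    have coeff1 : α ^ 3 * (sl + tu) ≤ su * tu * sl * (tl + tu) := by nlinarith
    have coeff2 : α ^ 3 * (sl + tu) ≤ sl * tl * tu * (su + sl) := by nlinarith
    have e1 : α ^ 3 * (sl + tu) * c' ≤ su * tu * sl * (tl + tu) * c' :=
      mul_le_mul_of_nonneg_right coeff1 hc
    have e2 : α ^ 3 * (sl + tu) * (-p') ≤ sl * tl * tu * (su + sl) * (-p') :=
      mul_le_mul_of_nonneg_right coeff2 (neg_nonneg.mpr hp)
    have hpos : 0 < sl + tu := by linarith
    have hkey : (sl + tu) * (α ^ 3 * (c' - p')) ≤ (sl + tu) * G := by nlinarith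
    exact le_of_mul_le_mul_left hkey hpos
  · -- c' ≥ 0, p' > 0 : use hA
    have c2 : α ^ 3 ≤ su * sl * tu := cube_le hα hsu hsl htu
    have := mul_le_mul_of_nonneg_right c2 hc
    nlinarith [mul_pos (pow_pos hα 3) hp]
  · -- c' < 0, p' ≤ 0 : use hB
    have c3 : α ^ 3 ≤ sl * tl * tu := cube_le hα hsl htl htu
    have := mul_le_mul_of_nonneg_right c3 (neg_nonneg.mpr hp)
    nlinarith [mul_pos (pow_pos hα 3) (neg_pos.mpr hc)]
  · -- c' < 0, p' > 0
    have hlt : c' - p' < 0 := by linarith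
    nlinarith [mul_neg_of_pos_of_neg (pow_pos hα 3) hlt]

/-- Lower bound on `Γ(w)` from ordered rectangles: if `S_u ≤ S_l ≤ T_l ≤ T_u` all have
measure at least `α`, then `Γ(w) ≥ α³ (w̄(S_u,T_u) − w̄(S_l,T_l))`. -/
theorem gamma_lower_bound (w : ℝ → ℝ → ℝ)
    (hmeas : Measurable (Function.uncurry w))
    (hsymm : ∀ x y, w x y = w y x)
    (C : ℝ) (hbdd : ∀ x y : ℝ, x ∈ Icc (0:ℝ) 1 → y ∈ Icc (0:ℝ) 1 → |w x y| ≤ C)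
    (α : ℝ) (hα : 0 < α)
    (Su Sl Tl Tu : Set ℝ)
    (hSu : MeasurableSet Su) (hSl : MeasurableSet Sl)
    (hTl : MeasurableSet Tl) (hTu : MeasurableSet Tu)
    (hSu1 : Su ⊆ Icc 0 1) (hSl1 : Sl ⊆ Icc 0 1)
    (hTl1 : Tl ⊆ Icc 0 1) (hTu1 : Tu ⊆ Icc 0 1)
    (hmSu : α ≤ (volume Su).toReal) (hmSl : α ≤ (volume Sl).toReal)
    (hmTl : α ≤ (volume Tl).toReal) (hmTu : α ≤ (volume Tu).toReal)
    (h1 : ∀ x ∈ Su, ∀ y ∈ Sl, x ≤ y)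
    (h2 : ∀ x ∈ Sl, ∀ y ∈ Tl, x ≤ y)
    (h3 : ∀ x ∈ Tl, ∀ y ∈ Tu, x ≤ y) :
    α ^ 3 * (avgOn w Su Tu - avgOn w Sl Tl) ≤ Gamma w := by
  -- nonemptiness of the middle sets
  have hSlne : Sl.Nonempty := by
    rcases Set.eq_empty_or_nonempty Sl with h | h
    · exfalso; rw [h] at hmSl; simp at hmSl; linarith
    · exact h
  have hTlne : Tl.Nonempty := by
    rcases Set.eq_empty_or_nonempty Tl with h | h
    · exfalso; rw [h] at hmTl; simp at hmTl; linarith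
    · exact h
  obtain ⟨s0, hs0⟩ := hSlne
  obtain ⟨t0, ht0⟩ := hTlne
  have hSuTl : ∀ x ∈ Su, ∀ y ∈ Tl, x ≤ y := fun x hx y hy =>
    le_trans (h1 x hx s0 hs0) (h2 s0 hs0 y hy)
  have hSuTu : ∀ x ∈ Su, ∀ y ∈ Tu, x ≤ y := fun x hx y hy =>
    le_trans (hSuTl x hx t0 ht0) (h3 t0 ht0 y hy)
  have hSlTu : ∀ x ∈ Sl, ∀ y ∈ Tu, x ≤ y := fun x hx y hy =>
    le_trans (h2 x hx t0 ht0) (h3 t0 ht0 y hy)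
  have hdS : volume (Su ∩ Sl) = 0 :=
    Set.Subsingleton.measure_zero
      (fun u hu v hv => le_antisymm (h1 u hu.1 v hv.2) (h1 v hv.1 u hu.2)) _
  have hdT : volume (Tl ∩ Tu) = 0 :=
    Set.Subsingleton.measure_zero
      (fun u hu v hv => le_antisymm (h3 u hu.1 v hv.2) (h3 v hv.1 u hu.2)) _
  -- the four region bounds
  have hr1 := region1 hmeas hbdd hSl hTl hTu hSl1 hTl1 hTu1 h2 h3
  have hr2 := region2 hmeas hbdd hTu hSu hSl hTu1 hSu1 hSl1 h1 hSlTu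
  have hABu : ∀ x ∈ Su ∪ Sl, ∀ y ∈ Tl, x ≤ y := fun x hx y hy =>
    hx.elim (fun h => hSuTl x h y hy) (fun h => h2 x h y hy)
  have hr5 := region1 hmeas hbdd (hSu.union hSl) hTl hTu
    (union_subset hSu1 hSl1) hTl1 hTu1 hABu h3
  have hCAu : ∀ z ∈ Sl, ∀ x ∈ Tl ∪ Tu, z ≤ x := fun z hz x hx =>
    hx.elim (fun h => h2 z hz x h) (fun h => hSlTu z hz x h)
  have hr6 := region2 hmeas hbdd (hTl.union hTu) hSu hSl
    (union_subset hTl1 hTu1) hSu1 hSl1 h1 hCAu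
  -- splitting unions
  have splitS : ∀ {Y : Set ℝ}, MeasurableSet Y → Y ⊆ Icc 0 1 →
      (∫ t in Y, ∫ x in Su ∪ Sl, w x t)
        = (∫ t in Y, ∫ x in Su, w x t) + (∫ t in Y, ∫ x in Sl, w x t) := by
    intro Y hY hY1
    rw [← integral_add (intOnG hmeas hbdd hSu hSu1 hY hY1) (intOnG hmeas hbdd hSl hSl1 hY hY1)]
    refine setIntegral_congr_fun hY fun t ht => ?_
    exact integral_union_ae hdS hSl.nullMeasurableSet
      (intOn hmeas hbdd hSu hSu1 (hY1 ht)) (intOn hmeas hbdd hSl hSl1 (hY1 ht))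
  have splitT : ∀ {Y : Set ℝ}, MeasurableSet Y → Y ⊆ Icc 0 1 →
      (∫ t in Y, ∫ x in Tl ∪ Tu, w x t)
        = (∫ t in Y, ∫ x in Tl, w x t) + (∫ t in Y, ∫ x in Tu, w x t) := by
    intro Y hY hY1
    rw [← integral_add (intOnG hmeas hbdd hTl hTl1 hY hY1) (intOnG hmeas hbdd hTu hTu1 hY hY1)]
    refine setIntegral_congr_fun hY fun t ht => ?_
    exact integral_union_ae hdT hTu.nullMeasurableSet
      (intOn hmeas hbdd hTl hTl1 (hY1 ht)) (intOn hmeas hbdd hTu hTu1 (hY1 ht))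
  -- orientation conversions
  have eq1 : (∫ z in Tu, ∫ x in Sl, w x z) = ∫ x in Sl, ∫ y in Tu, w x y :=
    (swapJ hmeas hbdd hSl hTu hSl1 hTu1).symm
  have eq2 : (∫ y in Tl, ∫ x in Sl, w x y) = ∫ x in Sl, ∫ y in Tl, w x y :=
    (swapJ hmeas hbdd hSl hTl hSl1 hTl1).symm
  have eq3 : (∫ y in Su, ∫ x in Tu, w x y) = ∫ x in Su, ∫ y in Tu, w x y := by
    rw [← swapJ hmeas hbdd hTu hSu hTu1 hSu1]
    exact symmJ hmeas hsymm hbdd hTu hSu hTu1 hSu1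
  have eq4 : (∫ z in Sl, ∫ x in Tu, w x z) = ∫ x in Sl, ∫ y in Tu, w x y := by
    rw [← swapJ hmeas hbdd hTu hSl hTu1 hSl1]
    exact symmJ hmeas hsymm hbdd hTu hSl hTu1 hSl1
  have eq5 : (∫ z in Tu, ∫ x in Su, w x z) = ∫ x in Su, ∫ y in Tu, w x y :=
    (swapJ hmeas hbdd hSu hTu hSu1 hTu1).symm
  have eq6 : (∫ y in Tl, ∫ x in Su, w x y) = ∫ x in Su, ∫ y in Tl, w x y :=
    (swapJ hmeas hbdd hSu hTl hSu1 hTl1).symm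
  have eq7 : (∫ y in Su, ∫ x in Tl, w x y) = ∫ x in Su, ∫ y in Tl, w x y := by
    rw [← swapJ hmeas hbdd hTl hSu hTl1 hSu1]
    exact symmJ hmeas hsymm hbdd hTl hSu hTl1 hSu1
  have eq8 : (∫ z in Sl, ∫ x in Tl, w x z) = ∫ x in Sl, ∫ y in Tl, w x y := by
    rw [← swapJ hmeas hbdd hTl hSl hTl1 hSl1]
    exact symmJ hmeas hsymm hbdd hTl hSl hTl1 hSl1
  rw [eq1, eq2] at hr1
  rw [eq3, eq4] at hr2
  rw [splitS hTu hTu1, splitS hTl hTl1, eq5, eq1, eq6, eq2] at hr5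
  rw [splitT hSu hSu1, splitT hSl hSl1, eq7, eq3, eq8, eq4] at hr6
  -- pass to Gamma
  have hle1 : gammaA w Sl ≤ Gamma w := le_Gamma hmeas hbdd hSl hSl1
  have hle2 : gammaA w Tu ≤ Gamma w := le_Gamma hmeas hbdd hTu hTu1
  have hle5 : gammaA w (Su ∪ Sl) ≤ Gamma w :=
    le_Gamma hmeas hbdd (hSu.union hSl) (union_subset hSu1 hSl1)
  have hle6 : gammaA w (Tl ∪ Tu) ≤ Gamma w :=
    le_Gamma hmeas hbdd (hTl.union hTu) (union_subset hTl1 hTu1)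
  have hG1 := hr1.trans hle1
  have hG2 := hr2.trans hle2
  have hG5 := hr5.trans hle5
  have hG6 := hr6.trans hle6
  have h0 : 0 ≤ Gamma w := Gamma_nonneg hmeas hbdd
  clear hr1 hr2 hr5 hr6 hle1 hle2 hle5 hle6 hdS hdT hSuTl hSuTu hSlTu hABu hCAu
  clear hmeas hsymm hbdd h1 h2 h3 hs0 ht0 hSu hSl hTl hTu
  -- abbreviations
  simp only [avgOn]
  set G := Gamma w with hG_def
  clear_value G
  set su := (volume Su).toReal with hsu_def
  set sl := (volume Sl).toReal with hsl_def
  set tl := (volume Tl).toReal with htl_def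
  set tu := (volume Tu).toReal with htu_def
  set Puu := ∫ x in Su, ∫ y in Tu, w x y with hPuu_def
  set Pll := ∫ x in Sl, ∫ y in Tl, w x y with hPll_def
  set Plu := ∫ x in Sl, ∫ y in Tu, w x y with hPlu_def
  set Pul := ∫ x in Su, ∫ y in Tl, w x y with hPul_def
  have hsu0 : 0 < su := lt_of_lt_of_le hα hmSu
  have hsl0 : 0 < sl := lt_of_lt_of_le hα hmSl
  have htl0 : 0 < tl := lt_of_lt_of_le hα hmTl
  have htu0 : 0 < tu := lt_of_lt_of_le hα hmTu
  set c' := Puu / (su * tu) - Plu / (sl * tu) with hc'_def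
  set p' := Pll / (sl * tl) - Plu / (sl * tu) with hp'_def
  clear_value su sl tl tu Puu Pll Plu Pul c' p'
  have hgoal_eq : Puu / (su * tu) - Pll / (sl * tl) = c' - p' := by
    rw [hc'_def, hp'_def]; ring
  rw [hgoal_eq]
  have dA : su * sl * tu * c' = sl * Puu - su * Plu := by
    rw [hc'_def]; field_simp
  have dB : -(sl * tl * tu * p') = tl * Plu - tu * Pll := by
    rw [hp'_def]; field_simp; ring
  have dC : su * tu * sl * (tl + tu) * c' - sl * tl * tu * (su + sl) * p'
      = sl * (tl * (Puu + Plu) - tu * (Pul + Pll))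
        + tu * (sl * (Pul + Puu) - su * (Pll + Plu)) := by
    rw [hc'_def, hp'_def]; field_simp; ring
  refine final_alg hα hmSu hmSl hmTl hmTu h0 ?_ ?_ ?_
  · rw [dA]; exact hG2
  · rw [dB]; exact hG1
  · rw [dC]
    have k5 := mul_le_mul_of_nonneg_left hG5 hsl0.le
    have k6 := mul_le_mul_of_nonneg_left hG6 htu0.le
    linarith [k5, k6]
end

section
/- Let I_i = ((i−1)/4, i/4] for i=1,…,4 and let w:[0,1]²→[0,1] be the symmetric step graphon with w = 0 on I_2×I_3, w = 1/2 on I_1×I_2 ∪ I_1×I_4 ∪ I_3×I_4, w = 1/4 on I_1×I_3 ∪ I_2×I_4, and w = 1 on all remaining cells (symmetrized). Then (1/2)(1/4)³ ≤ Γ(w) ≤ (5/4)·(1/2)(1/4)³; that is, 1/128 ≤ Γ(w) ≤ 5/512. -/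
open MeasureTheory Set

/-- The index `i` with `x ∈ I_i = ((i-1)/4, i/4]`; `cell4 x = ⌈4x⌉`. -/
noncomputable def cell4 (x : ℝ) : ℤ := ⌈4 * x⌉

/-- The step graphon of Remark 4.3: with `I_i = ((i−1)/4, i/4]`, it equals `0` on `I₂×I₃`,
`1/2` on `I₁×I₂ ∪ I₁×I₄ ∪ I₃×I₄`, `1/4` on `I₁×I₃ ∪ I₂×I₄`, and `1` on the remaining
cells, symmetrized. -/
noncomputable def wEx (x y : ℝ) : ℝ :=
  let a := min (cell4 x) (cell4 y)
  let b := max (cell4 x) (cell4 y)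
  if a = 2 ∧ b = 3 then 0
  else if (a = 1 ∧ b = 2) ∨ (a = 1 ∧ b = 4) ∨ (a = 3 ∧ b = 4) then 1/2
  else if (a = 1 ∧ b = 3) ∨ (a = 2 ∧ b = 4) then 1/4
  else 1

/-! ### Auxiliary machinery -/

/-- The step values as a function of the two cell indices. -/
noncomputable def Mval (a b : ℤ) : ℝ :=
  if a = 2 ∧ b = 3 then 0
  else if (a = 1 ∧ b = 2) ∨ (a = 1 ∧ b = 4) ∨ (a = 3 ∧ b = 4) then 1/2
  else if (a = 1 ∧ b = 3) ∨ (a = 2 ∧ b = 4) then 1/4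
  else 1

lemma wEx_eq (x y : ℝ) :
    wEx x y = Mval (min (cell4 x) (cell4 y)) (max (cell4 x) (cell4 y)) := rfl

lemma cell4_nonneg {x : ℝ} (h : 0 ≤ x) : 0 ≤ cell4 x := Int.ceil_nonneg (by linarith)
lemma cell4_mono {x y : ℝ} (h : x ≤ y) : cell4 x ≤ cell4 y := Int.ceil_le_ceil (by linarith)
lemma cell4_le_four {x : ℝ} (h : x ≤ 1) : cell4 x ≤ 4 := Int.ceil_le.mpr (by norm_num; linarith)
lemma cell4_pos {x : ℝ} (h : 0 < x) : 1 ≤ cell4 x := Int.ceil_pos.mpr (by linarith)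
lemma cell4_eq {x : ℝ} {n : ℤ} (h1 : ((n:ℝ)-1)/4 < x) (h2 : x ≤ (n:ℝ)/4) : cell4 x = n := by
  rw [cell4, Int.ceil_eq_iff]
  exact ⟨by linarith, by linarith⟩
lemma cell4_zero : cell4 0 = 0 := by norm_num [cell4]

lemma Mval_anti1 (i j k : ℤ) (h0 : 0 ≤ i) (hij : i ≤ j) (hjk : j ≤ k) (hk : k ≤ 4)
    (hex : ¬(j = 3 ∧ k = 4)) : Mval i k ≤ Mval i j := by
  have hi4 : i ≤ 4 := le_trans hij (le_trans hjk hk)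
  have hj4 : j ≤ 4 := le_trans hjk hk
  interval_cases i <;> interval_cases j <;> interval_cases k <;> simp_all [Mval] <;> norm_num

lemma Mval_anti2 (i j k : ℤ) (h0 : 1 ≤ j) (hjk : j ≤ k) (hki : k ≤ i) (hi : i ≤ 4)
    (hex : ¬(j = 1 ∧ k = 2)) : Mval j i ≤ Mval k i := by
  have hj4 : j ≤ 4 := le_trans hjk (le_trans hki hi)
  have hk4 : k ≤ 4 := le_trans hki hi
  interval_cases j <;> interval_cases k <;> interval_cases i <;> simp_all [Mval] <;> norm_num

lemma wEx_le_left {x y z : ℝ} (hx0 : 0 ≤ x) (hxy : x ≤ y) (hyz : y < z) (hz1 : z ≤ 1)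
    (hex : ¬(cell4 y = 3 ∧ cell4 z = 4)) : wEx x z ≤ wEx x y := by
  have hij := cell4_mono hxy
  have hjk := cell4_mono hyz.le
  have hik := le_trans hij hjk
  rw [wEx_eq, wEx_eq, min_eq_left hik, max_eq_right hik, min_eq_left hij, max_eq_right hij]
  exact Mval_anti1 _ _ _ (cell4_nonneg hx0) hij hjk (cell4_le_four hz1) hex

lemma wEx_le_right {x y z : ℝ} (hy0 : 0 < y) (hyz : y < z) (hzx : z ≤ x) (hx1 : x ≤ 1)
    (hex : ¬(cell4 y = 1 ∧ cell4 z = 2)) : wEx x y ≤ wEx x z := by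
  have hjk := cell4_mono hyz.le
  have hki := cell4_mono hzx
  have hji := le_trans hjk hki
  rw [wEx_eq, wEx_eq, min_eq_right hji, max_eq_left hji, min_eq_right hki, max_eq_left hki]
  exact Mval_anti2 _ _ _ (cell4_pos hy0) hjk hki (cell4_le_four hx1) hex

/-- Integral of a sum of two constant-indicators over a finite-measure set. -/
lemma setIntegral_two_indicator {S T U : Set ℝ} (hS : MeasurableSet S)
    (hT : MeasurableSet T) (hU : MeasurableSet U) (hSfin : volume S < ⊤) (cT cU : ℝ) :
    ∫ x in S, (T.indicator (fun _ => cT) x + U.indicator (fun _ => cU) x)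
      = cT * (volume (S ∩ T)).toReal + cU * (volume (S ∩ U)).toReal := by
  have hfin : ∀ V : Set ℝ, (volume.restrict S) V < ⊤ := by
    intro V
    refine lt_of_le_of_lt (measure_mono (subset_univ _)) ?_
    rw [Measure.restrict_apply_univ]
    exact hSfin
  have hT' : Integrable (T.indicator (fun _ => cT)) (volume.restrict S) :=
    (integrable_indicator_iff hT).2 (integrableOn_const (hfin T).ne)
  have hU' : Integrable (U.indicator (fun _ => cU)) (volume.restrict S) :=
    (integrable_indicator_iff hU).2 (integrableOn_const (hfin U).ne)
  rw [integral_add hT' hU', setIntegral_indicator hT, setIntegral_indicator hU,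
    setIntegral_const, setIntegral_const, smul_eq_mul, smul_eq_mul]
  simp only [measureReal_def]
  ring

lemma F_eq {A : Set ℝ} (hA : MeasurableSet A) {y z : ℝ}
    (hy : y ∈ Ioc (1/2:ℝ) (3/4)) (hz : z ∈ Ioc (3/4:ℝ) 1) :
    ∫ x in A ∩ Icc 0 y, (wEx x z - wEx x y)
      = (1/4) * (volume (A ∩ Ioc 0 (1/2))).toReal
        + (-(1/2)) * (volume (A ∩ Ioc (1/2) y)).toReal := by
  obtain ⟨hy1, hy2⟩ := hy
  obtain ⟨hz1, hz2⟩ := hz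
  have hS : MeasurableSet (A ∩ Icc 0 y) := hA.inter measurableSet_Icc
  have hcy : cell4 y = 3 := cell4_eq (by push_cast; linarith) (by push_cast; linarith)
  have hcz : cell4 z = 4 := cell4_eq (by push_cast; linarith) (by push_cast; linarith)
  have key : EqOn (fun x => wEx x z - wEx x y)
      (fun x => (Ioc (0:ℝ) (1/2)).indicator (fun _ => (1/4:ℝ)) x
        + (Ioc (1/2:ℝ) y).indicator (fun _ => (-(1/2):ℝ)) x) (A ∩ Icc 0 y) := by
    rintro x ⟨hxA, hx0, hxy⟩
    simp only [indicator_apply, mem_Ioc]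
    by_cases h12 : 1/2 < x
    · have hc : cell4 x = 3 := cell4_eq (by push_cast; linarith) (by push_cast; linarith)
      rw [if_neg (by rintro ⟨a, b⟩; linarith), if_pos ⟨h12, hxy⟩,
        wEx_eq, wEx_eq, hc, hcy, hcz]
      norm_num [Mval]
    · push_neg at h12
      by_cases hx0' : 0 < x
      · rw [if_pos ⟨hx0', h12⟩, if_neg (by rintro ⟨a, b⟩; linarith)]
        by_cases h14 : x ≤ 1/4
        · have hc : cell4 x = 1 := cell4_eq (by push_cast; linarith) (by push_cast; linarith)
          rw [wEx_eq, wEx_eq, hc, hcy, hcz]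
          norm_num [Mval]
        · have hc : cell4 x = 2 := cell4_eq (by push_cast; linarith) (by push_cast; linarith)
          rw [wEx_eq, wEx_eq, hc, hcy, hcz]
          norm_num [Mval]
      · have hx00 : x = 0 := le_antisymm (by linarith) hx0
        rw [if_neg (by rintro ⟨a, b⟩; linarith), if_neg (by rintro ⟨a, b⟩; linarith), hx00,
          wEx_eq, wEx_eq, cell4_zero, hcy, hcz]
        norm_num [Mval]
  rw [setIntegral_congr_fun hS key, setIntegral_two_indicator hS measurableSet_Ioc
    measurableSet_Ioc (lt_of_le_of_lt (measure_mono (inter_subset_right))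
      (by rw [Real.volume_Icc]; exact ENNReal.ofReal_lt_top))]
  have e1 : (A ∩ Icc 0 y) ∩ Ioc 0 (1/2) = A ∩ Ioc 0 (1/2) := by
    ext x
    simp only [mem_inter_iff, mem_Icc, mem_Ioc]
    constructor
    · tauto
    · rintro ⟨h1, h2, h3⟩
      exact ⟨⟨h1, h2.le, by linarith⟩, h2, h3⟩
  have e2 : (A ∩ Icc 0 y) ∩ Ioc (1/2) y = A ∩ Ioc (1/2) y := by
    ext x
    simp only [mem_inter_iff, mem_Icc, mem_Ioc]
    constructor
    · tauto
    · rintro ⟨h1, h2, h3⟩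
      exact ⟨⟨h1, by linarith, h3⟩, h2, h3⟩
  rw [e1, e2]

lemma G_eq {A : Set ℝ} (hA : MeasurableSet A) {y z : ℝ}
    (hy : y ∈ Ioc (0:ℝ) (1/4)) (hz : z ∈ Ioc (1/4:ℝ) (1/2)) :
    ∫ x in A ∩ Icc z 1, (wEx x y - wEx x z)
      = (1/4) * (volume (A ∩ Ioc (1/2) 1)).toReal
        + (-(1/2)) * (volume (A ∩ Icc z (1/2))).toReal := by
  obtain ⟨hy1, hy2⟩ := hy
  obtain ⟨hz1, hz2⟩ := hz
  have hS : MeasurableSet (A ∩ Icc z 1) := hA.inter measurableSet_Icc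
  have hcy : cell4 y = 1 := cell4_eq (by push_cast; linarith) (by push_cast; linarith)
  have hcz : cell4 z = 2 := cell4_eq (by push_cast; linarith) (by push_cast; linarith)
  have key : EqOn (fun x => wEx x y - wEx x z)
      (fun x => (Ioc (1/2:ℝ) 1).indicator (fun _ => (1/4:ℝ)) x
        + (Icc z (1/2:ℝ)).indicator (fun _ => (-(1/2):ℝ)) x) (A ∩ Icc z 1) := by
    rintro x ⟨hxA, hzx, hx1⟩
    simp only [indicator_apply, mem_Ioc, mem_Icc]
    by_cases h12 : 1/2 < x
    · rw [if_pos ⟨h12, hx1⟩, if_neg (by rintro ⟨a, b⟩; linarith)]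
      by_cases h34 : x ≤ 3/4
      · have hc : cell4 x = 3 := cell4_eq (by push_cast; linarith) (by push_cast; linarith)
        rw [wEx_eq, wEx_eq, hc, hcy, hcz]
        norm_num [Mval]
      · have hc : cell4 x = 4 := cell4_eq (by push_cast; linarith) (by push_cast; linarith)
        rw [wEx_eq, wEx_eq, hc, hcy, hcz]
        norm_num [Mval]
    · push_neg at h12
      have hc : cell4 x = 2 := cell4_eq (by push_cast; linarith) (by push_cast; linarith)
      rw [if_neg (by rintro ⟨a, b⟩; linarith), if_pos ⟨hzx, h12⟩,
        wEx_eq, wEx_eq, hc, hcy, hcz]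
      norm_num [Mval]
  rw [setIntegral_congr_fun hS key, setIntegral_two_indicator hS measurableSet_Ioc
    measurableSet_Icc (lt_of_le_of_lt (measure_mono (inter_subset_right))
      (by rw [Real.volume_Icc]; exact ENNReal.ofReal_lt_top))]
  have e1 : (A ∩ Icc z 1) ∩ Ioc (1/2) 1 = A ∩ Ioc (1/2) 1 := by
    ext x
    simp only [mem_inter_iff, mem_Icc, mem_Ioc]
    constructor
    · tauto
    · rintro ⟨h1, h2, h3⟩
      exact ⟨⟨h1, by linarith, h3⟩, h2, h3⟩
  have e2 : (A ∩ Icc z 1) ∩ Icc z (1/2) = A ∩ Icc z (1/2) := by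
    ext x
    simp only [mem_inter_iff, mem_Icc]
    constructor
    · tauto
    · rintro ⟨h1, h2, h3⟩
      exact ⟨⟨h1, h2, by linarith⟩, h2, h3⟩
  rw [e1, e2]


noncomputable def phi1 (A : Set ℝ) (y : ℝ) : ℝ :=
  max ((1/4) * (volume (A ∩ Ioc 0 (1/2))).toReal
    + (-(1/2)) * (volume (A ∩ Ioc (1/2) y)).toReal) 0

noncomputable def phi2 (A : Set ℝ) (z : ℝ) : ℝ :=
  max ((1/4) * (volume (A ∩ Ioc (1/2) 1)).toReal
    + (-(1/2)) * (volume (A ∩ Icc z (1/2))).toReal) 0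

lemma cell4_le_of_le_three_quarters {z : ℝ} (h : z ≤ 3/4) : cell4 z ≤ 3 :=
  Int.ceil_le.mpr (by push_cast; linarith)

lemma cell4_ge_of_half_lt {z : ℝ} (h : 1/2 < z) : 3 ≤ cell4 z := by
  have h2 : (2:ℤ) < ⌈4*z⌉ := Int.lt_ceil.mpr (by push_cast; linarith)
  rw [cell4]
  omega

lemma inner_y3 {A : Set ℝ} (hA : MeasurableSet A) {y : ℝ} (hy : y ∈ Ioc (1/2:ℝ) (3/4)) :
    (∫ z in Icc (0:ℝ) 1, if y < z then
        max (∫ x in A ∩ Icc 0 y, (wEx x z - wEx x y)) 0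
          + max (∫ x in A ∩ Icc z 1, (wEx x y - wEx x z)) 0
      else 0) = (1/4) * phi1 A y := by
  obtain ⟨hy1, hy2⟩ := hy
  have hcy : cell4 y = 3 := cell4_eq (by push_cast; linarith) (by push_cast; linarith)
  have key : EqOn (fun z => if y < z then
        max (∫ x in A ∩ Icc 0 y, (wEx x z - wEx x y)) 0
          + max (∫ x in A ∩ Icc z 1, (wEx x y - wEx x z)) 0
      else 0)
      ((Ioc (3/4:ℝ) 1).indicator (fun _ => phi1 A y)) (Icc 0 1) := by
    rintro z ⟨hz0, hz1⟩
    simp only [indicator_apply, mem_Ioc]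
    by_cases h34 : 3/4 < z
    · rw [if_pos (show y < z by linarith), if_pos ⟨h34, hz1⟩,
        F_eq hA ⟨hy1, hy2⟩ ⟨h34, hz1⟩]
      have hG : (∫ x in A ∩ Icc z 1, (wEx x y - wEx x z)) ≤ 0 := by
        apply setIntegral_nonpos (hA.inter measurableSet_Icc)
        rintro x ⟨hxA, hzx, hx1⟩
        have := wEx_le_right (show (0:ℝ) < y by linarith) (show y < z by linarith) hzx hx1
          (by rw [hcy]; rintro ⟨h, -⟩; exact absurd h (by norm_num))
        linarith
      rw [max_eq_right hG, add_zero, phi1]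
    · push_neg at h34
      by_cases hyz : y < z
      · rw [if_pos hyz, if_neg (by rintro ⟨a, -⟩; linarith)]
        have hF : (∫ x in A ∩ Icc 0 y, (wEx x z - wEx x y)) ≤ 0 := by
          apply setIntegral_nonpos (hA.inter measurableSet_Icc)
          rintro x ⟨hxA, hx0, hxy⟩
          have hz3 : cell4 z ≤ 3 := cell4_le_of_le_three_quarters h34
          have := wEx_le_left hx0 hxy hyz hz1 (by rintro ⟨-, h4⟩; omega)
          linarith
        have hG : (∫ x in A ∩ Icc z 1, (wEx x y - wEx x z)) ≤ 0 := by
          apply setIntegral_nonpos (hA.inter measurableSet_Icc)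
          rintro x ⟨hxA, hzx, hx1⟩
          have := wEx_le_right (show (0:ℝ) < y by linarith) hyz hzx hx1
            (by rw [hcy]; rintro ⟨h, -⟩; exact absurd h (by norm_num))
          linarith
        rw [max_eq_right hF, max_eq_right hG, add_zero]
      · rw [if_neg hyz, if_neg (by rintro ⟨a, -⟩; linarith)]
  rw [setIntegral_congr_fun measurableSet_Icc key, setIntegral_indicator measurableSet_Ioc]
  have e : Icc (0:ℝ) 1 ∩ Ioc (3/4) 1 = Ioc (3/4:ℝ) 1 := by
    rw [inter_eq_self_of_subset_right]
    rintro x ⟨a, b⟩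
    exact ⟨by linarith, by linarith⟩
  rw [e, setIntegral_const, measureReal_def, Real.volume_Ioc, smul_eq_mul,
    ENNReal.toReal_ofReal (by norm_num)]
  norm_num

lemma inner_y1 {A : Set ℝ} (hA : MeasurableSet A) {y : ℝ} (hy : y ∈ Ioc (0:ℝ) (1/4)) :
    (∫ z in Icc (0:ℝ) 1, if y < z then
        max (∫ x in A ∩ Icc 0 y, (wEx x z - wEx x y)) 0
          + max (∫ x in A ∩ Icc z 1, (wEx x y - wEx x z)) 0
      else 0) = ∫ z in Ioc (1/4:ℝ) (1/2), phi2 A z := by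
  obtain ⟨hy1, hy2⟩ := hy
  have hcy : cell4 y = 1 := cell4_eq (by push_cast; linarith) (by push_cast; linarith)
  have key : EqOn (fun z => if y < z then
        max (∫ x in A ∩ Icc 0 y, (wEx x z - wEx x y)) 0
          + max (∫ x in A ∩ Icc z 1, (wEx x y - wEx x z)) 0
      else 0)
      ((Ioc (1/4:ℝ) (1/2)).indicator (phi2 A)) (Icc 0 1) := by
    rintro z ⟨hz0, hz1⟩
    simp only [indicator_apply, mem_Ioc]
    by_cases hz14 : 1/4 < z ∧ z ≤ 1/2
    · rw [if_pos (show y < z by linarith [hz14.1]), if_pos hz14,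
        G_eq hA ⟨hy1, hy2⟩ hz14]
      have hF : (∫ x in A ∩ Icc 0 y, (wEx x z - wEx x y)) ≤ 0 := by
        apply setIntegral_nonpos (hA.inter measurableSet_Icc)
        rintro x ⟨hxA, hx0, hxy⟩
        have := wEx_le_left hx0 hxy (show y < z by linarith [hz14.1]) (by linarith [hz14.2])
          (by rw [hcy]; rintro ⟨h, -⟩; exact absurd h (by norm_num))
        linarith
      rw [max_eq_right hF, zero_add, phi2]
    · by_cases hyz : y < z
      · rw [if_pos hyz, if_neg hz14]
        have hzcell : cell4 z ≠ 2 := by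
          rcases le_or_gt z (1/4) with h | h
          · have : cell4 z ≤ 1 := Int.ceil_le.mpr (by push_cast; linarith)
            omega
          · have h2 : 1/2 < z := by
              by_contra hcon
              push_neg at hcon
              exact hz14 ⟨h, hcon⟩
            have := cell4_ge_of_half_lt h2
            omega
        have hF : (∫ x in A ∩ Icc 0 y, (wEx x z - wEx x y)) ≤ 0 := by
          apply setIntegral_nonpos (hA.inter measurableSet_Icc)
          rintro x ⟨hxA, hx0, hxy⟩
          have := wEx_le_left hx0 hxy hyz hz1
            (by rw [hcy]; rintro ⟨h, -⟩; exact absurd h (by norm_num))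
          linarith
        have hG : (∫ x in A ∩ Icc z 1, (wEx x y - wEx x z)) ≤ 0 := by
          apply setIntegral_nonpos (hA.inter measurableSet_Icc)
          rintro x ⟨hxA, hzx, hx1⟩
          have := wEx_le_right hy1 hyz hzx hx1 (by rintro ⟨-, h⟩; exact hzcell h)
          linarith
        rw [max_eq_right hF, max_eq_right hG, add_zero]
      · rw [if_neg hyz, if_neg hz14]
  rw [setIntegral_congr_fun measurableSet_Icc key, setIntegral_indicator measurableSet_Ioc]
  congr 1
  rw [inter_eq_self_of_subset_right]
  rintro x ⟨a, b⟩
  exact ⟨by linarith, by linarith⟩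

lemma inner_zero {A : Set ℝ} (hA : MeasurableSet A) {y : ℝ} (hy : y ∈ Ioc (0:ℝ) 1)
    (h1 : cell4 y ≠ 1) (h3 : cell4 y ≠ 3) :
    (∫ z in Icc (0:ℝ) 1, if y < z then
        max (∫ x in A ∩ Icc 0 y, (wEx x z - wEx x y)) 0
          + max (∫ x in A ∩ Icc z 1, (wEx x y - wEx x z)) 0
      else 0) = 0 := by
  obtain ⟨hy1, hy2⟩ := hy
  have key : EqOn (fun z => if y < z then
        max (∫ x in A ∩ Icc 0 y, (wEx x z - wEx x y)) 0
          + max (∫ x in A ∩ Icc z 1, (wEx x y - wEx x z)) 0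
      else 0) (fun _ => (0:ℝ)) (Icc 0 1) := by
    rintro z ⟨hz0, hz1⟩
    simp only
    by_cases hyz : y < z
    · rw [if_pos hyz]
      have hF : (∫ x in A ∩ Icc 0 y, (wEx x z - wEx x y)) ≤ 0 := by
        apply setIntegral_nonpos (hA.inter measurableSet_Icc)
        rintro x ⟨hxA, hx0, hxy⟩
        have := wEx_le_left hx0 hxy hyz hz1 (by rintro ⟨h, -⟩; exact h3 h)
        linarith
      have hG : (∫ x in A ∩ Icc z 1, (wEx x y - wEx x z)) ≤ 0 := by
        apply setIntegral_nonpos (hA.inter measurableSet_Icc)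
        rintro x ⟨hxA, hzx, hx1⟩
        have := wEx_le_right hy1 hyz hzx hx1 (by rintro ⟨h, -⟩; exact h1 h)
        linarith
      rw [max_eq_right hF, max_eq_right hG, add_zero]
    · rw [if_neg hyz]
  rw [setIntegral_congr_fun measurableSet_Icc key, integral_zero]


lemma vol_ne_top (A : Set ℝ) (a b : ℝ) : volume (A ∩ Ioc a b) ≠ ⊤ :=
  ne_top_of_le_ne_top (by rw [Real.volume_Ioc]; exact ENNReal.ofReal_ne_top)
    (measure_mono inter_subset_right)

lemma vol_toReal_le (A : Set ℝ) {a b : ℝ} (h : a ≤ b) :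
    (volume (A ∩ Ioc a b)).toReal ≤ b - a := by
  have h1 : (volume (Ioc a b)).toReal = b - a := by
    rw [Real.volume_Ioc, ENNReal.toReal_ofReal (by linarith)]
  rw [← h1]
  exact ENNReal.toReal_mono (by rw [Real.volume_Ioc]; exact ENNReal.ofReal_ne_top)
    (measure_mono inter_subset_right)

lemma phi1_nonneg (A : Set ℝ) (y : ℝ) : 0 ≤ phi1 A y := le_max_right _ _
lemma phi2_nonneg (A : Set ℝ) (z : ℝ) : 0 ≤ phi2 A z := le_max_right _ _

lemma phi1_le (A : Set ℝ) (y : ℝ) : phi1 A y ≤ 1/8 := by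
  rw [phi1]
  apply max_le ?_ (by norm_num)
  have h1 := vol_toReal_le A (show (0:ℝ) ≤ 1/2 by norm_num)
  have h2 : (0:ℝ) ≤ (volume (A ∩ Ioc (1/2) y)).toReal := ENNReal.toReal_nonneg
  linarith

lemma phi2_le (A : Set ℝ) (z : ℝ) : phi2 A z ≤ 1/8 := by
  rw [phi2]
  apply max_le ?_ (by norm_num)
  have h1 := vol_toReal_le A (show (1/2:ℝ) ≤ 1 by norm_num)
  have h2 : (0:ℝ) ≤ (volume (A ∩ Icc z (1/2))).toReal := ENNReal.toReal_nonneg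
  linarith

lemma phi1_measurable (A : Set ℝ) : Measurable (phi1 A) := by
  have hmono : Monotone (fun y => (volume (A ∩ Ioc (1/2) y)).toReal) := by
    intro y1 y2 h
    exact ENNReal.toReal_mono (vol_ne_top A _ _)
      (measure_mono (inter_subset_inter_right _ (Ioc_subset_Ioc_right h)))
  exact (measurable_const.add (hmono.measurable.const_mul _)).max measurable_const

lemma phi2_measurable (A : Set ℝ) : Measurable (phi2 A) := by
  have hanti : Antitone (fun z => (volume (A ∩ Icc z (1/2))).toReal) := by
    intro z1 z2 h
    refine ENNReal.toReal_mono ?_ (measure_mono (inter_subset_inter_right _ (Icc_subset_Icc_left h)))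
    exact ne_top_of_le_ne_top (by rw [Real.volume_Icc]; exact ENNReal.ofReal_ne_top)
      (measure_mono inter_subset_right)
  exact (measurable_const.add (hanti.measurable.const_mul _)).max measurable_const

lemma integrableOn_of_bounded {f : ℝ → ℝ} (hf : Measurable f) {s : Set ℝ}
    (hs : volume s < ⊤) {C : ℝ} (hC : ∀ x, ‖f x‖ ≤ C) : IntegrableOn f s volume :=
  Integrable.mono' (integrableOn_const hs.ne) hf.aestronglyMeasurable
    (Filter.Eventually.of_forall hC)

lemma master {A : Set ℝ} (hA : MeasurableSet A) :
    gammaA wEx A = (1/4) * (∫ y in Ioc (1/2:ℝ) (3/4), phi1 A y)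
      + (1/4) * (∫ z in Ioc (1/4:ℝ) (1/2), phi2 A z) := by
  set V2 : ℝ := ∫ z in Ioc (1/4:ℝ) (1/2), phi2 A z with hV2
  rw [gammaA]
  have h0 : ∀ᵐ (y:ℝ) ∂volume, y ≠ (0:ℝ) := by
    rw [ae_iff]
    convert Real.volume_singleton (a := (0:ℝ)) using 2
    ext y
    simp
  have hae : ∀ᵐ (y:ℝ) ∂volume, y ∈ Icc (0:ℝ) 1 →
      (∫ z in Icc (0:ℝ) 1, if y < z then
        max (∫ x in A ∩ Icc 0 y, (wEx x z - wEx x y)) 0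
          + max (∫ x in A ∩ Icc z 1, (wEx x y - wEx x z)) 0
      else 0)
        = (Ioc (1/2:ℝ) (3/4)).indicator (fun t => (1/4) * phi1 A t) y
          + (Ioc (0:ℝ) (1/4)).indicator (fun _ => V2) y := by
    filter_upwards [h0] with y hy0 hmem
    obtain ⟨hy0', hy1⟩ := hmem
    have hy0'' : 0 < y := lt_of_le_of_ne hy0' (Ne.symm hy0)
    simp only [indicator_apply, mem_Ioc]
    rcases le_or_gt y (1/4) with h14 | h14
    · rw [inner_y1 hA ⟨hy0'', h14⟩, if_neg (by rintro ⟨a, -⟩; linarith),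
        if_pos ⟨hy0'', h14⟩, zero_add, hV2]
    · rcases le_or_gt y (1/2) with h12 | h12
      · have hc : cell4 y = 2 := cell4_eq (by push_cast; linarith) (by push_cast; linarith)
        rw [inner_zero hA ⟨hy0'', hy1⟩ (by omega) (by omega),
          if_neg (by rintro ⟨a, -⟩; linarith), if_neg (by rintro ⟨-, b⟩; linarith), add_zero]
      · rcases le_or_gt y (3/4) with h34 | h34
        · rw [inner_y3 hA ⟨h12, h34⟩, if_pos ⟨h12, h34⟩,
            if_neg (by rintro ⟨-, b⟩; linarith), add_zero]
        · have hc : cell4 y = 4 := cell4_eq (by push_cast; linarith) (by push_cast; linarith)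
          rw [inner_zero hA ⟨hy0'', hy1⟩ (by omega) (by omega),
            if_neg (by rintro ⟨-, b⟩; linarith), if_neg (by rintro ⟨-, b⟩; linarith), add_zero]
  rw [setIntegral_congr_ae measurableSet_Icc hae]
  have i1 : IntegrableOn ((Ioc (1/2:ℝ) (3/4)).indicator (fun t => (1/4) * phi1 A t))
      (Icc (0:ℝ) 1) volume := by
    apply integrableOn_of_bounded (((phi1_measurable A).const_mul _).indicator measurableSet_Ioc)
      (by rw [Real.volume_Icc]; exact ENNReal.ofReal_lt_top) (C := 1)
    intro x
    rw [indicator_apply]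
    split_ifs
    · rw [Real.norm_eq_abs, abs_of_nonneg (mul_nonneg (by norm_num) (phi1_nonneg A x))]
      have := phi1_le A x
      linarith
    · simp
  have i2 : IntegrableOn ((Ioc (0:ℝ) (1/4)).indicator (fun _ => V2)) (Icc (0:ℝ) 1) volume := by
    apply integrableOn_of_bounded (measurable_const.indicator measurableSet_Ioc)
      (by rw [Real.volume_Icc]; exact ENNReal.ofReal_lt_top) (C := ‖V2‖)
    intro x
    rw [indicator_apply]
    split_ifs
    · exact le_refl _
    · simpa using norm_nonneg V2
  rw [integral_add i1 i2, setIntegral_indicator measurableSet_Ioc,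
    setIntegral_indicator measurableSet_Ioc]
  have e1 : Icc (0:ℝ) 1 ∩ Ioc (1/2) (3/4) = Ioc (1/2:ℝ) (3/4) := by
    rw [inter_eq_self_of_subset_right]
    rintro x ⟨a, b⟩
    exact ⟨by linarith, by linarith⟩
  have e2 : Icc (0:ℝ) 1 ∩ Ioc 0 (1/4) = Ioc (0:ℝ) (1/4) := by
    rw [inter_eq_self_of_subset_right]
    rintro x ⟨a, b⟩
    exact ⟨by linarith, by linarith⟩
  rw [e1, e2, integral_const_mul, setIntegral_const, measureReal_def, Real.volume_Ioc, smul_eq_mul,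
    ENNReal.toReal_ofReal (by norm_num)]
  norm_num


lemma psi_le {c b : ℝ} (hc1 : 1/16 ≤ c) (hc2 : c ≤ 1/8) (hb0 : 0 ≤ b) (hb : b ≤ 1/4) :
    (∫ y in Ioc (1/2:ℝ) (3/4), max (c - max (b - (3/4 - y)) 0 / 2) 0)
      ≤ c/4 - b^2/4 + (max (b/2 - c) 0)^2 := by
  set f : ℝ → ℝ := fun y => max (c - max (b - (3/4 - y)) 0 / 2) 0 with hf
  have hcont : Continuous f := by
    apply Continuous.max ?_ continuous_const
    apply Continuous.sub continuous_const
    apply Continuous.div_const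
    apply Continuous.max ?_ continuous_const
    fun_prop
  have hint : ∀ a b : ℝ, IntervalIntegrable f volume a b :=
    fun a b => hcont.intervalIntegrable a b
  have hIoc : (∫ y in Ioc (1/2:ℝ) (3/4), f y) = ∫ y in (1/2:ℝ)..(3/4), f y :=
    (intervalIntegral.integral_of_le (by norm_num)).symm
  rw [hIoc]
  obtain ⟨y0, hy0⟩ : ∃ w : ℝ, w = 3/4 - b := ⟨_, rfl⟩
  have hy0l : 1/2 ≤ y0 := by linarith
  have hy0r : y0 ≤ 3/4 := by linarith
  have piece1 : (∫ y in (1/2:ℝ)..y0, f y) = c * (y0 - 1/2) := by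
    have he : EqOn f (fun _ => c) (uIcc (1/2:ℝ) y0) := by
      intro t ht
      rw [uIcc_of_le hy0l] at ht
      obtain ⟨ht1, ht2⟩ := ht
      rw [hf]
      simp only
      rw [max_eq_right (by linarith [hy0] : b - (3/4 - t) ≤ 0),
        max_eq_left (by linarith : (0:ℝ) ≤ c - 0/2)]
      norm_num
    rw [intervalIntegral.integral_congr he, intervalIntegral.integral_const, smul_eq_mul, mul_comm]
  have lin_int : ∀ u v : ℝ, (∫ t in u..v, ((c + y0/2) - t/2))
      = (c + y0/2) * (v - u) - (v^2 - u^2)/4 := by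
    intro u v
    rw [intervalIntegral.integral_sub (intervalIntegrable_const (c := c + y0/2))
      (show IntervalIntegrable (fun t : ℝ => t/2) volume u v by
        exact (continuous_id.div_const 2).intervalIntegrable u v)]
    have hdiv : (∫ t in u..v, t/2) = (∫ t in u..v, t)/2 := intervalIntegral.integral_div 2 _
    rw [hdiv, intervalIntegral.integral_const, integral_id, smul_eq_mul]
    ring
  rcases le_or_gt b (2*c) with hcase | hcase
  · have hsplit : (∫ y in (1/2:ℝ)..y0, f y) + (∫ y in y0..(3/4:ℝ), f y)
        = ∫ y in (1/2:ℝ)..(3/4:ℝ), f y :=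
      intervalIntegral.integral_add_adjacent_intervals (hint _ _) (hint _ _)
    have piece2 : (∫ y in y0..(3/4:ℝ), f y) = c * b - b^2/4 := by
      have he : EqOn f (fun t => (c + y0/2) - t/2) (uIcc y0 (3/4:ℝ)) := by
        intro t ht
        rw [uIcc_of_le hy0r] at ht
        obtain ⟨ht1, ht2⟩ := ht
        rw [hf]
        simp only
        rw [max_eq_left (by linarith [hy0] : (0:ℝ) ≤ b - (3/4 - t)),
          max_eq_left (by linarith [hy0] : (0:ℝ) ≤ c - (b - (3/4 - t))/2)]
        linarith
      rw [intervalIntegral.integral_congr he, lin_int, hy0]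
      ring
    rw [← hsplit, piece1, piece2]
    have hq : (0:ℝ) ≤ (max (b/2 - c) 0)^2 := sq_nonneg _
    rw [hy0]
    nlinarith
  · obtain ⟨y1, hy1⟩ : ∃ w : ℝ, w = y0 + 2*c := ⟨_, rfl⟩
    have hy1l : y0 ≤ y1 := by linarith
    have hy1r : y1 ≤ 3/4 := by linarith
    have hsplit : (∫ y in (1/2:ℝ)..y0, f y) + (∫ y in y0..(3/4:ℝ), f y)
        = ∫ y in (1/2:ℝ)..(3/4:ℝ), f y :=
      intervalIntegral.integral_add_adjacent_intervals (hint _ _) (hint _ _)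
    have hsplit2 : (∫ y in y0..y1, f y) + (∫ y in y1..(3/4:ℝ), f y)
        = ∫ y in y0..(3/4:ℝ), f y :=
      intervalIntegral.integral_add_adjacent_intervals (hint _ _) (hint _ _)
    have piece2 : (∫ y in y0..y1, f y) = c^2 := by
      have he : EqOn f (fun t => (c + y0/2) - t/2) (uIcc y0 y1) := by
        intro t ht
        rw [uIcc_of_le hy1l] at ht
        obtain ⟨ht1, ht2⟩ := ht
        rw [hf]
        simp only
        rw [max_eq_left (by linarith [hy0] : (0:ℝ) ≤ b - (3/4 - t)),
          max_eq_left (by linarith [hy0, hy1] :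
            (0:ℝ) ≤ c - (b - (3/4 - t))/2)]
        linarith
      rw [intervalIntegral.integral_congr he, lin_int, hy1, hy0]
      ring
    have piece3 : (∫ y in y1..(3/4:ℝ), f y) = 0 := by
      have he : EqOn f (fun _ => (0:ℝ)) (uIcc y1 (3/4:ℝ)) := by
        intro t ht
        rw [uIcc_of_le hy1r] at ht
        obtain ⟨ht1, ht2⟩ := ht
        rw [hf]
        simp only
        rw [max_eq_left (by linarith [hy0, hy1] :
            (0:ℝ) ≤ b - (3/4 - t)),
          max_eq_right (by linarith [hy0, hy1] : c - (b - (3/4 - t))/2 ≤ 0)]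
      rw [intervalIntegral.integral_congr he, intervalIntegral.integral_zero]
    rw [← hsplit, ← hsplit2, piece1, piece2, piece3]
    have hq : max (b/2 - c) 0 = b/2 - c := max_eq_left (by linarith)
    rw [hq, hy0]
    ring_nf
    nlinarith

lemma psi2_le {c b : ℝ} (hc1 : 1/16 ≤ c) (hc2 : c ≤ 1/8) (hb0 : 0 ≤ b) (hb : b ≤ 1/4) :
    (∫ z in Ioc (1/4:ℝ) (1/2), max (c - max (b - (z - 1/4)) 0 / 2) 0)
      ≤ c/4 - b^2/4 + (max (b/2 - c) 0)^2 := by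
  have key : (∫ z in Ioc (1/4:ℝ) (1/2), max (c - max (b - (z - 1/4)) 0 / 2) 0)
      = ∫ y in Ioc (1/2:ℝ) (3/4), max (c - max (b - (3/4 - y)) 0 / 2) 0 := by
    rw [← intervalIntegral.integral_of_le (show (1/4:ℝ) ≤ 1/2 by norm_num),
      ← intervalIntegral.integral_of_le (show (1/2:ℝ) ≤ 3/4 by norm_num)]
    have he : EqOn (fun z => max (c - max (b - (z - 1/4)) 0 / 2) 0)
        (fun z => (fun y => max (c - max (b - (3/4 - y)) 0 / 2) 0) (1 - z))
        (uIcc (1/4:ℝ) (1/2)) := by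
      intro z _
      simp only
      have e : (3:ℝ)/4 - (1 - z) = z - 1/4 := by ring
      rw [e]
    rw [intervalIntegral.integral_congr he,
      intervalIntegral.integral_comp_sub_left (fun y => max (c - max (b - (3/4 - y)) 0 / 2) 0) 1]
    norm_num
  rw [key]
  exact psi_le hc1 hc2 hb0 hb

lemma toReal_union_le {S T : Set ℝ} {U : Set ℝ} (h : U ⊆ S ∪ T)
    (hS : volume S ≠ ⊤) (hT : volume T ≠ ⊤) :
    (volume U).toReal ≤ (volume S).toReal + (volume T).toReal := by
  have h1 : volume U ≤ volume S + volume T :=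
    le_trans (measure_mono h) (measure_union_le S T)
  have h2 := ENNReal.toReal_mono (by finiteness) h1
  rwa [ENNReal.toReal_add hS hT] at h2

set_option maxHeartbeats 1000000 in
lemma upper {A : Set ℝ} (hA : MeasurableSet A) : gammaA wEx A ≤ 5/512 := by
  rw [master hA]
  obtain ⟨b2, hb2⟩ : ∃ w : ℝ, w = (volume (A ∩ Ioc (1/4:ℝ) (1/2))).toReal := ⟨_, rfl⟩
  obtain ⟨b3, hb3⟩ : ∃ w : ℝ, w = (volume (A ∩ Ioc (1/2:ℝ) (3/4))).toReal := ⟨_, rfl⟩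
  have hb2a : 0 ≤ b2 := hb2 ▸ ENNReal.toReal_nonneg
  have hb3a : 0 ≤ b3 := hb3 ▸ ENNReal.toReal_nonneg
  have hb2b : b2 ≤ 1/4 := by
    rw [hb2]
    have := vol_toReal_le A (show (1/4:ℝ) ≤ 1/2 by norm_num)
    linarith
  have hb3b : b3 ≤ 1/4 := by
    rw [hb3]
    have := vol_toReal_le A (show (1/2:ℝ) ≤ 3/4 by norm_num)
    linarith
  have step1 : (∫ y in Ioc (1/2:ℝ) (3/4), phi1 A y)
      ≤ ∫ y in Ioc (1/2:ℝ) (3/4), max ((1/16 + b2/4) - max (b3 - (3/4 - y)) 0 / 2) 0 := by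
    apply setIntegral_mono_on
    · apply integrableOn_of_bounded (phi1_measurable A)
        (by rw [Real.volume_Ioc]; exact ENNReal.ofReal_lt_top) (C := 1/8)
      intro x
      rw [Real.norm_eq_abs, abs_of_nonneg (phi1_nonneg A x)]
      exact phi1_le A x
    · apply integrableOn_of_bounded ?_ (by rw [Real.volume_Ioc]; exact ENNReal.ofReal_lt_top)
        (C := 1/8)
      · intro x
        rw [Real.norm_eq_abs, abs_of_nonneg (le_max_right _ _)]
        apply max_le ?_ (by norm_num)
        have : (0:ℝ) ≤ max (b3 - (3/4 - x)) 0 := le_max_right _ _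
        linarith
      · have hm : Monotone (fun y : ℝ => max (b3 - (3/4 - y)) 0) := by
          intro a b h
          apply max_le_max ?_ (le_refl 0)
          linarith
        exact (measurable_const.sub ((hm.measurable).div_const 2)).max measurable_const
    · exact measurableSet_Ioc
    · intro y hy
      obtain ⟨hy1, hy2⟩ := hy
      rw [phi1]
      apply max_le_max ?_ (le_refl 0)
      have hm : (volume (A ∩ Ioc 0 (1/2))).toReal ≤ 1/4 + b2 := by
        rw [hb2]
        have h1 : A ∩ Ioc 0 (1/2) ⊆ (A ∩ Ioc (0:ℝ) (1/4)) ∪ (A ∩ Ioc (1/4:ℝ) (1/2)) := by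
          rintro x ⟨hxA, hx1, hx2⟩
          rcases le_or_gt x (1/4) with h | h
          · exact Or.inl ⟨hxA, hx1, h⟩
          · exact Or.inr ⟨hxA, h, hx2⟩
        have h2 := toReal_union_le h1 (vol_ne_top A _ _) (vol_ne_top A _ _)
        have h3 := vol_toReal_le A (show (0:ℝ) ≤ 1/4 by norm_num)
        linarith
      have hg : max (b3 - (3/4 - y)) 0 ≤ (volume (A ∩ Ioc (1/2) y)).toReal := by
        apply max_le ?_ ENNReal.toReal_nonneg
        have h1 : A ∩ Ioc (1/2:ℝ) (3/4) ⊆ (A ∩ Ioc (1/2:ℝ) y) ∪ Ioc y (3/4:ℝ) := by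
          rintro x ⟨hxA, hx1, hx2⟩
          rcases le_or_gt x y with h | h
          · exact Or.inl ⟨hxA, hx1, h⟩
          · exact Or.inr ⟨h, hx2⟩
        have h2 := toReal_union_le h1 (vol_ne_top A _ _)
          (by rw [Real.volume_Ioc]; exact ENNReal.ofReal_ne_top)
        have h3 : (volume (Ioc y (3/4:ℝ))).toReal = 3/4 - y := by
          rw [Real.volume_Ioc, ENNReal.toReal_ofReal (by linarith)]
        rw [← hb3] at h2
        rw [h3] at h2
        linarith
      linarith
  have step2 : (∫ z in Ioc (1/4:ℝ) (1/2), phi2 A z)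
      ≤ ∫ z in Ioc (1/4:ℝ) (1/2), max ((1/16 + b3/4) - max (b2 - (z - 1/4)) 0 / 2) 0 := by
    apply setIntegral_mono_on
    · apply integrableOn_of_bounded (phi2_measurable A)
        (by rw [Real.volume_Ioc]; exact ENNReal.ofReal_lt_top) (C := 1/8)
      intro x
      rw [Real.norm_eq_abs, abs_of_nonneg (phi2_nonneg A x)]
      exact phi2_le A x
    · apply integrableOn_of_bounded ?_ (by rw [Real.volume_Ioc]; exact ENNReal.ofReal_lt_top)
        (C := 1/8)
      · intro x
        rw [Real.norm_eq_abs, abs_of_nonneg (le_max_right _ _)]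
        apply max_le ?_ (by norm_num)
        have : (0:ℝ) ≤ max (b2 - (x - 1/4)) 0 := le_max_right _ _
        linarith
      · have hm : Antitone (fun z : ℝ => max (b2 - (z - 1/4)) 0) := by
          intro a b h
          apply max_le_max ?_ (le_refl 0)
          linarith
        exact (measurable_const.sub ((hm.measurable).div_const 2)).max measurable_const
    · exact measurableSet_Ioc
    · intro z hz
      obtain ⟨hz1, hz2⟩ := hz
      rw [phi2]
      apply max_le_max ?_ (le_refl 0)
      have hm : (volume (A ∩ Ioc (1/2) 1)).toReal ≤ 1/4 + b3 := by
        rw [hb3]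
        have h1 : A ∩ Ioc (1/2:ℝ) 1 ⊆ (A ∩ Ioc (1/2:ℝ) (3/4)) ∪ (A ∩ Ioc (3/4:ℝ) 1) := by
          rintro x ⟨hxA, hx1, hx2⟩
          rcases le_or_gt x (3/4) with h | h
          · exact Or.inl ⟨hxA, hx1, h⟩
          · exact Or.inr ⟨hxA, h, hx2⟩
        have h2 := toReal_union_le h1 (vol_ne_top A _ _) (vol_ne_top A _ _)
        have h3 := vol_toReal_le A (show (3/4:ℝ) ≤ 1 by norm_num)
        linarith
      have hg : max (b2 - (z - 1/4)) 0 ≤ (volume (A ∩ Icc z (1/2))).toReal := by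
        apply max_le ?_ ENNReal.toReal_nonneg
        have h1 : A ∩ Ioc (1/4:ℝ) (1/2) ⊆ (A ∩ Icc z (1/2:ℝ)) ∪ Ioc (1/4:ℝ) z := by
          rintro x ⟨hxA, hx1, hx2⟩
          rcases le_or_gt z x with h | h
          · exact Or.inl ⟨hxA, h, hx2⟩
          · exact Or.inr ⟨hx1, h.le⟩
        have h2 := toReal_union_le h1
          (ne_top_of_le_ne_top (by rw [Real.volume_Icc]; exact ENNReal.ofReal_ne_top)
            (measure_mono inter_subset_right))
          (by rw [Real.volume_Ioc]; exact ENNReal.ofReal_ne_top)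
        have h3 : (volume (Ioc (1/4:ℝ) z)).toReal = z - 1/4 := by
          rw [Real.volume_Ioc, ENNReal.toReal_ofReal (by linarith)]
        rw [← hb2] at h2
        rw [h3] at h2
        linarith
      linarith
  have k1 := psi_le (c := 1/16 + b2/4) (b := b3) (by linarith) (by linarith) hb3a hb3b
  have k2 := psi2_le (c := 1/16 + b3/4) (b := b2) (by linarith) (by linarith) hb2a hb2b
  have final : (1/4) * ((1/16 + b2/4)/4 - b3^2/4 + (max (b3/2 - (1/16 + b2/4)) 0)^2)
      + (1/4) * ((1/16 + b3/4)/4 - b2^2/4 + (max (b2/2 - (1/16 + b3/4)) 0)^2) ≤ 5/512 := by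
    rcases max_cases (b3/2 - (1/16 + b2/4)) 0 with ⟨e3, he3⟩ | ⟨e3, he3⟩ <;>
      rcases max_cases (b2/2 - (1/16 + b3/4)) 0 with ⟨e2, he2⟩ | ⟨e2, he2⟩ <;>
      rw [e2, e3]
    · have hz3 : b3/2 - (1/16 + b2/4) = 0 := by linarith
      have hz2 : b2/2 - (1/16 + b3/4) = 0 := by linarith
      rw [hz3, hz2]
      nlinarith [sq_nonneg (b2 - 1/8), sq_nonneg (b3 - 1/8)]
    · nlinarith [mul_nonneg hb3a (show (0:ℝ) ≤ b3 - 1/8 - b2/2 by linarith),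
        sq_nonneg (b2 - 1/10)]
    · nlinarith [mul_nonneg hb2a (show (0:ℝ) ≤ b2 - 1/8 - b3/2 by linarith),
        sq_nonneg (b3 - 1/10)]
    · nlinarith [sq_nonneg (b2 - 1/8), sq_nonneg (b3 - 1/8)]
  linarith

lemma lower_val : gammaA wEx (Ioc (0:ℝ) (1/2)) = 1/128 := by
  rw [master measurableSet_Ioc]
  have h1 : EqOn (phi1 (Ioc (0:ℝ) (1/2))) (fun _ => (1/32:ℝ) * 4) (Ioc (1/2:ℝ) (3/4)) := by
    intro y hy
    obtain ⟨hy1, hy2⟩ := hy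
    rw [phi1]
    have e1 : Ioc (0:ℝ) (1/2) ∩ Ioc 0 (1/2) = Ioc (0:ℝ) (1/2) := inter_self _
    have e2 : Ioc (0:ℝ) (1/2) ∩ Ioc (1/2) y = (∅ : Set ℝ) := by
      ext x
      simp only [mem_inter_iff, mem_Ioc, mem_empty_iff_false, iff_false]
      rintro ⟨⟨-, h2⟩, h3, -⟩
      linarith
    rw [e1, e2, measure_empty, Real.volume_Ioc, ENNReal.toReal_zero,
      ENNReal.toReal_ofReal (by norm_num)]
    norm_num
  have h2 : EqOn (phi2 (Ioc (0:ℝ) (1/2))) (fun _ => (0:ℝ)) (Ioc (1/4:ℝ) (1/2)) := by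
    intro z hz
    rw [phi2]
    have e1 : Ioc (0:ℝ) (1/2) ∩ Ioc (1/2) 1 = (∅ : Set ℝ) := by
      ext x
      simp only [mem_inter_iff, mem_Ioc, mem_empty_iff_false, iff_false]
      rintro ⟨⟨-, h2⟩, h3, -⟩
      linarith
    rw [e1, measure_empty]
    apply max_eq_right
    have : (0:ℝ) ≤ (volume (Ioc (0:ℝ) (1/2) ∩ Icc z (1/2))).toReal := ENNReal.toReal_nonneg
    simp only [ENNReal.toReal_zero]
    linarith
  rw [setIntegral_congr_fun measurableSet_Ioc h1, setIntegral_congr_fun measurableSet_Ioc h2,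
    setIntegral_const, setIntegral_const, measureReal_def, measureReal_def, Real.volume_Ioc, Real.volume_Ioc, smul_eq_mul,
    smul_eq_mul, ENNReal.toReal_ofReal (by norm_num), ENNReal.toReal_ofReal (by norm_num)]
  norm_num

/-- `(1/2)(1/4)³ ≤ Γ(wEx) ≤ (5/4)(1/2)(1/4)³`, i.e. `1/128 ≤ Γ(wEx) ≤ 5/512`. -/
theorem gamma_of_example : 1/128 ≤ Gamma wEx ∧ Gamma wEx ≤ 5/512 := by
  have hub : ∀ r ∈ {r : ℝ | ∃ A : Set ℝ, MeasurableSet A ∧ A ⊆ Icc 0 1 ∧ r = gammaA wEx A},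
      r ≤ 5/512 := by
    rintro r ⟨A, hAm, -, rfl⟩
    exact upper hAm
  constructor
  · have hmem : (1/128:ℝ) ∈ {r : ℝ | ∃ A : Set ℝ, MeasurableSet A ∧ A ⊆ Icc 0 1
        ∧ r = gammaA wEx A} :=
      ⟨Ioc 0 (1/2), measurableSet_Ioc,
        fun x hx => ⟨le_of_lt hx.1, le_trans hx.2 (by norm_num)⟩, lower_val.symm⟩
    exact le_csSup ⟨5/512, hub⟩ hmem
  · exact Real.sSup_le hub (by norm_num)
end

section
/- With the regions B_k, W_k, G_k defined for a graphon w with Γ(w)>0, α = Γ(w)^{2/7}, and an integer m≥1: (a) if (x₁,y₁), (x₂,y₂) ∈ G_k then UL(x₁,y₁) ∩ LR(x₂,y₂) ⊆ G_k; and (b) for every k = 0,…,m, B_{k+1} ∩ W_k = ∅. -/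
open MeasureTheory Set

/-- A graphon: symmetric, measurable, `[0,1]`-valued on `[0,1]²`. -/
def IsGraphon (w : ℝ → ℝ → ℝ) : Prop :=
  Measurable (Function.uncurry w) ∧ (∀ x y, w x y = w y x) ∧
    ∀ x y : ℝ, x ∈ Icc (0:ℝ) 1 → y ∈ Icc (0:ℝ) 1 → w x y ∈ Icc (0:ℝ) 1

/-- The region `Δ = {(x,y) ∈ [0,1]² : x ≤ y}` above the diagonal. -/
def Delta : Set (ℝ × ℝ) := {p | 0 ≤ p.1 ∧ p.1 ≤ p.2 ∧ p.2 ≤ 1}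

/-- The upper-left region `UL(x,y) = [0,x] × [y,1]`. -/
def UL (x y : ℝ) : Set (ℝ × ℝ) := Icc 0 x ×ˢ Icc y 1

/-- The lower-right region `LR(x,y) = ([x,y] × [x,y]) ∩ Δ`. -/
def LR (x y : ℝ) : Set (ℝ × ℝ) := (Icc x y ×ˢ Icc x y) ∩ Delta

/-- The `k`-th black region `B_k` (for `0 ≤ k ≤ m+1`), with `B_0 = Δ` and `B_{m+1} = ∅`. -/
noncomputable def regionB (w : ℝ → ℝ → ℝ) (α : ℝ) (m k : ℕ) : Set (ℝ × ℝ) :=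
  if k = 0 then Delta
  else if k = m + 1 then ∅
  else {p | p ∈ Delta ∧ (p.1 = p.2 ∨ ∃ S T : Set ℝ, MeasurableSet S ∧ MeasurableSet T ∧
    S ×ˢ T ⊆ UL p.1 p.2 ∧ (volume S).toReal = α ∧ (volume T).toReal = α ∧
    ((k : ℝ) - 1) / m < avgOn w S T)}

/-- The `k`-th white region `W_k` (for `0 ≤ k ≤ m+1`), with `W_0 = ∅` and `W_{m+1} = Δ`. -/
noncomputable def regionW (w : ℝ → ℝ → ℝ) (α : ℝ) (m k : ℕ) : Set (ℝ × ℝ) :=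
  if k = 0 then ∅
  else if k = m + 1 then Delta
  else {p | p ∈ Delta \ regionB w α m k ∧ ∃ S T : Set ℝ, MeasurableSet S ∧ MeasurableSet T ∧
    S ×ˢ T ⊆ LR p.1 p.2 ∧ (volume S).toReal = α ∧ (volume T).toReal = α ∧
    avgOn w S T ≤ ((k : ℝ) - 1) / m}

/-- The `k`-th grey region `G_k = Δ ∖ (B_k ∪ W_k)`. -/
noncomputable def regionG (w : ℝ → ℝ → ℝ) (α : ℝ) (m k : ℕ) : Set (ℝ × ℝ) :=
  Delta \ (regionB w α m k ∪ regionW w α m k)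

/-- `R_k = B_k ∩ W_{k+1}`. -/
noncomputable def regionR (w : ℝ → ℝ → ℝ) (α : ℝ) (m k : ℕ) : Set (ℝ × ℝ) :=
  regionB w α m k ∩ regionW w α m (k + 1)

/-- (a) If `(x₁,y₁), (x₂,y₂) ∈ G_k` then `UL(x₁,y₁) ∩ LR(x₂,y₂) ⊆ G_k` (for `1 ≤ k ≤ m`);
(b) `B_{k+1} ∩ W_k = ∅` for every `k = 0, …, m`. -/
theorem grey_regions_property (w : ℝ → ℝ → ℝ) (hw : IsGraphon w) (hΓ : 0 < Gamma w)
    (α : ℝ) (hα : α = Gamma w ^ ((2:ℝ)/7)) (m : ℕ) (hm : 1 ≤ m) :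
    (∀ k : ℕ, 1 ≤ k → k ≤ m →
      ∀ p ∈ regionG w α m k, ∀ q ∈ regionG w α m k,
        UL p.1 p.2 ∩ LR q.1 q.2 ⊆ regionG w α m k) ∧
      (∀ k : ℕ, k ≤ m → regionB w α m (k + 1) ∩ regionW w α m k = ∅) := by
  
  constructor
  · intro k hk1 hkm p hp q hq r hr
    have hk0 : k ≠ 0 := by omega
    have hk1' : k ≠ m + 1 := by omega
    simp only [regionG, regionB, regionW, if_neg hk0, if_neg hk1', mem_diff, mem_union,
      not_or, mem_setOf_eq] at hp hq ⊢
    obtain ⟨hpD, hpB, hpW⟩ := hp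
    obtain ⟨hqD, hqB, hqW⟩ := hq
    obtain ⟨hrUL, hrLR⟩ := hr
    obtain ⟨hrbox, hrD⟩ := hrLR
    simp only [UL, mem_prod, mem_Icc] at hrUL
    simp only [mem_prod, mem_Icc] at hrbox
    refine ⟨hrD, ?_, ?_⟩
    · rintro ⟨-, hdiag | ⟨S, T, hS, hT, hsub, hvS, hvT, havg⟩⟩
      · apply hpB
        refine ⟨hpD, Or.inl ?_⟩
        have h1 := hrUL.1.2
        have h2 := hrUL.2.1
        have h3 := hpD.2.1
        linarith
      · apply hpB
        refine ⟨hpD, Or.inr ⟨S, T, hS, hT, ?_, hvS, hvT, havg⟩⟩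
        intro z hz
        have hz' := hsub hz
        simp only [UL, mem_prod, mem_Icc] at hz' ⊢
        exact ⟨⟨hz'.1.1, hz'.1.2.trans hrUL.1.2⟩, ⟨hrUL.2.1.trans hz'.2.1, hz'.2.2⟩⟩
    · rintro ⟨-, S, T, hS, hT, hsub, hvS, hvT, havg⟩
      apply hqW
      refine ⟨⟨hqD, hqB⟩, S, T, hS, hT, ?_, hvS, hvT, havg⟩
      intro z hz
      obtain ⟨hzbox, hzD⟩ := hsub hz
      simp only [LR, mem_prod, mem_Icc, mem_inter_iff] at hzbox ⊢
      exact ⟨⟨⟨hrbox.1.1.trans hzbox.1.1, hzbox.1.2.trans hrbox.2.2⟩,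
        ⟨hrbox.1.1.trans hzbox.2.1, hzbox.2.2.trans hrbox.2.2⟩⟩, hzD⟩
  · intro k hk
    rcases Nat.eq_zero_or_pos k with h0 | hpos
    · subst h0; simp [regionW]
    rcases eq_or_lt_of_le hk with hkm | hklt
    · subst hkm; simp [regionB]
    have hk0 : k ≠ 0 := by omega
    have hkm1 : k ≠ m + 1 := by omega
    have hk10 : k + 1 ≠ 0 := by omega
    have hk1m1 : k + 1 ≠ m + 1 := by omega
    ext p
    simp only [regionB, regionW, if_neg hk0, if_neg hkm1, if_neg hk10, if_neg hk1m1,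
      mem_inter_iff, mem_setOf_eq, mem_empty_iff_false, iff_false, not_and, mem_diff]
    rintro ⟨hpD, hcase⟩ hW
    intro _
    apply hW.2 hpD
    rcases hcase with h | ⟨S, T, hS, hT, hsub, hvS, hvT, havg⟩
    · exact Or.inl h
    · refine Or.inr ⟨S, T, hS, hT, hsub, hvS, hvT, lt_of_le_of_lt ?_ havg⟩
      have hmpos : (0:ℝ) < m := by exact_mod_cast hpos.trans_le hk
      push_cast
      gcongr
      linarith
end

section
/- With the regions B_k, W_k, G_k defined for a graphon w with Γ(w)>0, α = Γ(w)^{2/7}, and an integer m≥1, and with R_k = B_k ∩ W_{k+1} for k = 0,…,m: the sets R_0,…,R_m are pairwise disjoint, and Δ ∖ (⋃_{k=1}^{m} G_k) = ⋃_{k=0}^{m} R_k. -/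
open MeasureTheory Set

section Aux

variable (w : ℝ → ℝ → ℝ) (α : ℝ) (m : ℕ)

lemma B_subset_Delta (k : ℕ) : regionB w α m k ⊆ Delta := by
  unfold regionB
  split_ifs
  · exact subset_rfl
  · exact Set.empty_subset _
  · exact fun p hp => hp.1

lemma W_subset_Delta (k : ℕ) : regionW w α m k ⊆ Delta := by
  unfold regionW
  split_ifs
  · exact Set.empty_subset _
  · exact subset_rfl
  · exact fun p hp => hp.1.1

lemma thresh_mono (hm : 1 ≤ m) {a b : ℕ} (hab : a ≤ b) :
    ((a : ℝ) - 1) / m ≤ ((b : ℝ) - 1) / m := by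
  have hmpos : (0:ℝ) < m := by exact_mod_cast hm
  rw [div_le_div_iff₀ hmpos hmpos]
  have : (a:ℝ) ≤ b := by exact_mod_cast hab
  nlinarith

lemma B_mono (hm : 1 ≤ m) {a b : ℕ} (ha : 1 ≤ a) (hab : a ≤ b) (hb : b ≤ m) :
    regionB w α m b ⊆ regionB w α m a := by
  intro p hp
  have ha0 : ¬ (a = 0) := by omega
  have ha1 : ¬ (a = m + 1) := by omega
  have hb0 : ¬ (b = 0) := by omega
  have hb1 : ¬ (b = m + 1) := by omega
  simp only [regionB, if_neg hb0, if_neg hb1, Set.mem_setOf_eq] at hp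
  simp only [regionB, if_neg ha0, if_neg ha1, Set.mem_setOf_eq]
  refine ⟨hp.1, hp.2.imp id ?_⟩
  rintro ⟨S, T, hS, hT, hsub, hvS, hvT, havg⟩
  exact ⟨S, T, hS, hT, hsub, hvS, hvT, lt_of_le_of_lt (thresh_mono m hm hab) havg⟩

lemma W_disj_B (hm : 1 ≤ m) {a b : ℕ} (ha : 1 ≤ a) (hab : a ≤ b) (hb : b ≤ m)
    {p : ℝ × ℝ} (hp : p ∈ regionW w α m a) : p ∉ regionB w α m b := by
  have ha0 : ¬ (a = 0) := by omega
  have ha1 : ¬ (a = m + 1) := by omega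
  have hb0 : ¬ (b = 0) := by omega
  have hb1 : ¬ (b = m + 1) := by omega
  simp only [regionW, if_neg ha0, if_neg ha1, Set.mem_setOf_eq] at hp
  obtain ⟨⟨hΔ, hnB⟩, -⟩ := hp
  intro hpb
  simp only [regionB, if_neg hb0, if_neg hb1, Set.mem_setOf_eq] at hpb
  apply hnB
  simp only [regionB, if_neg ha0, if_neg ha1, Set.mem_setOf_eq]
  refine ⟨hΔ, hpb.2.imp id ?_⟩
  rintro ⟨S, T, hS, hT, hsub, hvS, hvT, havg⟩
  exact ⟨S, T, hS, hT, hsub, hvS, hvT, lt_of_le_of_lt (thresh_mono m hm hab) havg⟩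

lemma W_mono (hm : 1 ≤ m) {a b : ℕ} (ha : 1 ≤ a) (hab : a ≤ b) (hb : b ≤ m) :
    regionW w α m a ⊆ regionW w α m b := by
  intro p hp
  have hnBb : p ∉ regionB w α m b := W_disj_B w α m hm ha hab hb hp
  have ha0 : ¬ (a = 0) := by omega
  have ha1 : ¬ (a = m + 1) := by omega
  have hb0 : ¬ (b = 0) := by omega
  have hb1 : ¬ (b = m + 1) := by omega
  simp only [regionW, if_neg ha0, if_neg ha1, Set.mem_setOf_eq] at hp
  obtain ⟨⟨hΔ, -⟩, S, T, hS, hT, hsub, hvS, hvT, havg⟩ := hp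
  simp only [regionW, if_neg hb0, if_neg hb1, Set.mem_setOf_eq]
  exact ⟨⟨hΔ, hnBb⟩, S, T, hS, hT, hsub, hvS, hvT,
    le_trans havg (thresh_mono m hm hab)⟩

end Aux

/-- The regions `R_0, …, R_m` are pairwise disjoint, and
`Δ ∖ (⋃_{k=1}^m G_k) = ⋃_{k=0}^m R_k`. -/
theorem regionR_partition (w : ℝ → ℝ → ℝ) (hw : IsGraphon w) (hΓ : 0 < Gamma w)
    (α : ℝ) (hα : α = Gamma w ^ ((2:ℝ)/7)) (m : ℕ) (hm : 1 ≤ m) :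
    (∀ i j : ℕ, i ≤ m → j ≤ m → i ≠ j →
      regionR w α m i ∩ regionR w α m j = ∅) ∧
      Delta \ (⋃ k ∈ Finset.Icc 1 m, regionG w α m k) =
        ⋃ k ∈ Finset.Icc 0 m, regionR w α m k := by
  classical
  have key : ∀ i j : ℕ, i < j → j ≤ m →
      regionR w α m i ∩ regionR w α m j = ∅ := by
    intro i j hij hjm
    apply Set.eq_empty_iff_forall_notMem.mpr
    intro p hp
    have hWi : p ∈ regionW w α m (i + 1) := hp.1.2
    have hBj : p ∈ regionB w α m j := hp.2.1
    exact W_disj_B w α m hm (by omega) (by omega) hjm hWi hBj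
  constructor
  · intro i j him hjm hij
    rcases lt_or_gt_of_ne hij with h | h
    · exact key i j h hjm
    · rw [Set.inter_comm]; exact key j i h him
  · ext p
    simp only [Set.mem_diff, Set.mem_iUnion, not_exists, Finset.mem_Icc]
    constructor
    · rintro ⟨hΔ, hG⟩
      set P : ℕ → Prop := fun k => p ∈ regionB w α m k with hP
      have hP0 : P 0 := by
        simp only [hP, regionB, if_pos rfl]
        exact hΔ
      set k := Nat.findGreatest P m with hk
      have hkm : k ≤ m := Nat.findGreatest_le m
      have hPk : P k := Nat.findGreatest_spec (Nat.zero_le m) hP0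
      have hnB : p ∉ regionB w α m (k + 1) := by
        rcases eq_or_lt_of_le hkm with heq | hlt
        · rw [heq]
          simp only [regionB, if_neg (Nat.succ_ne_zero m), if_pos rfl]
          exact Set.notMem_empty p
        · exact Nat.findGreatest_is_greatest (Nat.lt_succ_self k) hlt
      have hW : p ∈ regionW w α m (k + 1) := by
        rcases eq_or_lt_of_le hkm with heq | hlt
        · rw [heq]
          simp only [regionW, if_neg (Nat.succ_ne_zero m), if_pos rfl]
          exact hΔ
        · have hBW : p ∈ regionB w α m (k + 1) ∪ regionW w α m (k + 1) := by
            by_contra hc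
            exact hG (k + 1) ⟨by omega, hlt⟩ ⟨hΔ, hc⟩
          exact hBW.resolve_left hnB
      exact ⟨k, ⟨Nat.zero_le k, hkm⟩, hPk, hW⟩
    · rintro ⟨k, ⟨-, hkm⟩, hpB, hpW⟩
      have hΔ : p ∈ Delta := B_subset_Delta w α m k hpB
      refine ⟨hΔ, ?_⟩
      rintro j ⟨hj1, hjm⟩ hpG
      rcases le_or_gt j k with hjk | hkj
      · exact hpG.2 (Or.inl (B_mono w α m hm hj1 hjk hkm hpB))
      · exact hpG.2 (Or.inr (W_mono w α m hm (by omega) hkj hjm hpW))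
end

section
/- With the regions G_k defined for a graphon w with Γ(w)>0, α = Γ(w)^{2/7}, and an integer m≥1: for every k ∈ {1,…,m}, every β > α, and all measurable S,T ⊆ [0,1] with |S| = |T| = β, the product S×T is not contained in the closure of G_k in ℝ². -/
open MeasureTheory Set

lemma vol_cdf_ne_top (S : Set ℝ) (t : ℝ) : volume (S ∩ Icc 0 t) ≠ ⊤ := by
  refine ne_top_of_le_ne_top ?_ (measure_mono inter_subset_right)
  simp [Real.volume_Icc]

lemma cdf_mono (S : Set ℝ) {a b : ℝ} (h : a ≤ b) :
    (volume (S ∩ Icc 0 a)).toReal ≤ (volume (S ∩ Icc 0 b)).toReal :=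
  ENNReal.toReal_mono (vol_cdf_ne_top S b)
    (measure_mono (inter_subset_inter_right _ (Icc_subset_Icc_right h)))

lemma cdf_lip (S : Set ℝ) {a b : ℝ} (h : a ≤ b) :
    (volume (S ∩ Icc 0 b)).toReal ≤ (volume (S ∩ Icc 0 a)).toReal + (b - a) := by
  have hsub : S ∩ Icc 0 b ⊆ (S ∩ Icc 0 a) ∪ Ioc a b := by
    rintro x ⟨hxS, hx0, hxb⟩
    rcases le_or_gt x a with h' | h'
    · exact Or.inl ⟨hxS, hx0, h'⟩
    · exact Or.inr ⟨h', hxb⟩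
  have h1 : volume (S ∩ Icc 0 b) ≤ volume (S ∩ Icc 0 a) + volume (Ioc a b) :=
    (measure_mono hsub).trans (measure_union_le _ _)
  have h2 : volume (S ∩ Icc 0 a) + volume (Ioc a b) ≠ ⊤ :=
    ENNReal.add_ne_top.mpr ⟨vol_cdf_ne_top S a, by simp [Real.volume_Ioc]⟩
  have := ENNReal.toReal_mono h2 h1
  rwa [ENNReal.toReal_add (vol_cdf_ne_top S a) (by simp [Real.volume_Ioc]),
    Real.volume_Ioc, ENNReal.toReal_ofReal (sub_nonneg.mpr h)] at this

lemma cdf_cont (S : Set ℝ) : Continuous fun t => (volume (S ∩ Icc 0 t)).toReal := by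
  refine (LipschitzWith.of_dist_le_mul (K := 1) ?_).continuous
  intro a b
  simp only [NNReal.coe_one, one_mul, Real.dist_eq]
  rw [abs_sub_le_iff]
  rcases le_total a b with h | h
  · have h1 := cdf_mono S h
    have h2 := cdf_lip S h
    have h3 : |a - b| = b - a := by rw [abs_sub_comm]; exact abs_of_nonneg (sub_nonneg.mpr h)
    constructor <;> linarith
  · have h1 := cdf_mono S h
    have h2 := cdf_lip S h
    have h3 : |a - b| = a - b := abs_of_nonneg (sub_nonneg.mpr h)
    constructor <;> linarith

lemma cdf_ivt (S : Set ℝ) (hS1 : S ⊆ Icc 0 1) {c : ℝ} (hc0 : 0 ≤ c)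
    (hc : c ≤ (volume S).toReal) :
    ∃ t ∈ Icc (0:ℝ) 1, (volume (S ∩ Icc 0 t)).toReal = c := by
  have h0 : (volume (S ∩ Icc (0:ℝ) 0)).toReal = 0 := by
    have : volume (S ∩ Icc (0:ℝ) 0) ≤ volume ({0} : Set ℝ) := by
      refine measure_mono ?_
      rintro x ⟨-, hx0, hx0'⟩
      simpa using le_antisymm hx0' hx0
    simp only [Real.volume_singleton, nonpos_iff_eq_zero] at this
    rw [this]; simp
  have h1 : (volume (S ∩ Icc (0:ℝ) 1)).toReal = (volume S).toReal := by
    rw [inter_eq_left.mpr hS1]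
  have hmem : c ∈ Icc ((fun t => (volume (S ∩ Icc 0 t)).toReal) 0)
      ((fun t => (volume (S ∩ Icc 0 t)).toReal) 1) := by
    simp only [h0, h1]; exact ⟨hc0, hc⟩
  obtain ⟨t, ht, htc⟩ := intermediate_value_Icc zero_le_one (cdf_cont S).continuousOn hmem
  exact ⟨t, ht, htc⟩

lemma cdf_exists_gt (S : Set ℝ) (hS1 : S ⊆ Icc 0 1) {t : ℝ}
    (h : (volume (S ∩ Icc 0 t)).toReal < (volume S).toReal) : ∃ s ∈ S, t < s := by
  by_contra hcon
  push_neg at hcon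
  have : S ∩ Icc 0 t = S := inter_eq_left.mpr fun s hs => ⟨(hS1 hs).1, hcon s hs⟩
  rw [this] at h
  exact lt_irrefl _ h

lemma cdf_exists_le (S : Set ℝ) {t : ℝ}
    (h : 0 < (volume (S ∩ Icc 0 t)).toReal) : ∃ s ∈ S, s ≤ t := by
  have hne : (S ∩ Icc 0 t).Nonempty := by
    refine nonempty_of_measure_ne_zero (μ := volume) fun h0 => ?_
    rw [h0] at h; simp at h
  obtain ⟨s, hsS, -, hst⟩ := hne
  exact ⟨s, hsS, hst⟩

lemma cdf_lt (S : Set ℝ) {a b : ℝ}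
    (h : (volume (S ∩ Icc 0 a)).toReal < (volume (S ∩ Icc 0 b)).toReal) : a < b := by
  by_contra hcon
  push_neg at hcon
  exact absurd (cdf_mono S hcon) (not_le.mpr h)

lemma cdf_slice (S : Set ℝ) (hS : MeasurableSet S) {a b : ℝ} (h0 : 0 ≤ a) (h : a ≤ b) :
    (volume (S ∩ Ioc a b)).toReal
      = (volume (S ∩ Icc 0 b)).toReal - (volume (S ∩ Icc 0 a)).toReal := by
  have hunion : S ∩ Icc 0 b = (S ∩ Icc 0 a) ∪ (S ∩ Ioc a b) := by
    ext x
    constructor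
    · rintro ⟨hxS, hx0, hxb⟩
      rcases le_or_gt x a with h' | h'
      · exact Or.inl ⟨hxS, hx0, h'⟩
      · exact Or.inr ⟨hxS, h', hxb⟩
    · rintro (⟨hxS, hx0, hxa⟩ | ⟨hxS, hxa, hxb⟩)
      · exact ⟨hxS, hx0, hxa.trans h⟩
      · exact ⟨hxS, h0.trans hxa.le, hxb⟩
  have hdisj : Disjoint (S ∩ Icc 0 a) (S ∩ Ioc a b) := by
    rw [Set.disjoint_left]
    rintro x ⟨-, -, hxa⟩ ⟨-, hxa', -⟩
    exact absurd hxa (not_le.mpr hxa')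
  have hioc : volume (S ∩ Ioc a b) ≠ ⊤ := by
    refine ne_top_of_le_ne_top ?_ (measure_mono inter_subset_right)
    simp [Real.volume_Ioc]
  have : volume (S ∩ Icc 0 b) = volume (S ∩ Icc 0 a) + volume (S ∩ Ioc a b) := by
    rw [hunion]; exact measure_union hdisj (hS.inter measurableSet_Ioc)
  rw [this, ENNReal.toReal_add (vol_cdf_ne_top S a) hioc]
  ring

lemma isClosed_Delta : IsClosed Delta := by
  have h1 : IsClosed {p : ℝ × ℝ | 0 ≤ p.1} := isClosed_le continuous_const continuous_fst
  have h2 : IsClosed {p : ℝ × ℝ | p.1 ≤ p.2} := isClosed_le continuous_fst continuous_snd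
  have h3 : IsClosed {p : ℝ × ℝ | p.2 ≤ 1} := isClosed_le continuous_snd continuous_const
  have : Delta = {p : ℝ × ℝ | 0 ≤ p.1} ∩ ({p : ℝ × ℝ | p.1 ≤ p.2} ∩ {p : ℝ × ℝ | p.2 ≤ 1}) := by
    ext p; simp [Delta, mem_inter_iff, and_assoc]
  rw [this]
  exact h1.inter (h2.inter h3)

lemma closure_point {X : Set (ℝ × ℝ)} {p : ℝ × ℝ} (hp : p ∈ closure X) {δ : ℝ} (hδ : 0 < δ) :
    ∃ q ∈ X, |p.1 - q.1| < δ ∧ |p.2 - q.2| < δ := by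
  obtain ⟨q, hq, hdist⟩ := Metric.mem_closure_iff.mp hp δ hδ
  rw [Prod.dist_eq] at hdist
  exact ⟨q, hq, by
    rw [← Real.dist_eq]; exact lt_of_le_of_lt (le_max_left _ _) hdist, by
    rw [← Real.dist_eq]; exact lt_of_le_of_lt (le_max_right _ _) hdist⟩

lemma regionB_eq (w : ℝ → ℝ → ℝ) (α : ℝ) (m k : ℕ) (hk0 : k ≠ 0) (hkm : k ≠ m + 1) :
    regionB w α m k = {p | p ∈ Delta ∧ (p.1 = p.2 ∨ ∃ S T : Set ℝ,
      MeasurableSet S ∧ MeasurableSet T ∧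
      S ×ˢ T ⊆ UL p.1 p.2 ∧ (volume S).toReal = α ∧ (volume T).toReal = α ∧
      ((k : ℝ) - 1) / m < avgOn w S T)} := by
  unfold regionB
  rw [if_neg hk0, if_neg hkm]

lemma regionW_eq (w : ℝ → ℝ → ℝ) (α : ℝ) (m k : ℕ) (hk0 : k ≠ 0) (hkm : k ≠ m + 1) :
    regionW w α m k = {p | p ∈ Delta \ regionB w α m k ∧ ∃ S T : Set ℝ,
      MeasurableSet S ∧ MeasurableSet T ∧
      S ×ˢ T ⊆ LR p.1 p.2 ∧ (volume S).toReal = α ∧ (volume T).toReal = α ∧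
      avgOn w S T ≤ ((k : ℝ) - 1) / m} := by
  unfold regionW
  rw [if_neg hk0, if_neg hkm]

/-- The closure of a grey region `G_k` contains no `β × β` rectangle with `β > α`. -/
theorem grey_region_small (w : ℝ → ℝ → ℝ) (hw : IsGraphon w) (hΓ : 0 < Gamma w)
    (α : ℝ) (hα : α = Gamma w ^ ((2:ℝ)/7)) (m : ℕ) (hm : 1 ≤ m)
    (k : ℕ) (hk1 : 1 ≤ k) (hk2 : k ≤ m)
    (β : ℝ) (hβ : α < β) (S T : Set ℝ)
    (hS : MeasurableSet S) (hT : MeasurableSet T)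
    (hS1 : S ⊆ Icc 0 1) (hT1 : T ⊆ Icc 0 1)
    (hmS : (volume S).toReal = β) (hmT : (volume T).toReal = β) :
    ¬ S ×ˢ T ⊆ closure (regionG w α m k) := by
  intro hsub
  have hk0 : k ≠ 0 := by omega
  have hkm : k ≠ m + 1 := by omega
  have hα0 : 0 < α := by rw [hα]; exact Real.rpow_pos_of_pos hΓ _
  have hGΔ : regionG w α m k ⊆ Delta := diff_subset
  have hclo : closure (regionG w α m k) ⊆ Delta :=
    closure_minimal hGΔ isClosed_Delta
  have hpair : ∀ s ∈ S, ∀ t ∈ T, 0 ≤ s ∧ s ≤ t ∧ t ≤ 1 :=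
    fun s hs t ht => hclo (hsub (mk_mem_prod hs ht))
  set γ : ℝ := (β - α) / 8 with hγdef
  have hγ0 : 0 < γ := by rw [hγdef]; linarith
  have hβ8 : β = α + 8 * γ := by rw [hγdef]; ring
  -- quantiles for S
  obtain ⟨a', ha'I, ha'⟩ := cdf_ivt S hS1 (c := γ / 2) (by linarith) (by rw [hmS]; linarith)
  obtain ⟨a, haI, ha⟩ := cdf_ivt S hS1 (c := γ) (by linarith) (by rw [hmS]; linarith)
  obtain ⟨u, huI, hu⟩ := cdf_ivt S hS1 (c := γ + α) (by linarith) (by rw [hmS]; linarith)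
  obtain ⟨x, hxI, hx⟩ := cdf_ivt S hS1 (c := 4 * γ + α) (by linarith) (by rw [hmS]; linarith)
  -- quantiles for T
  obtain ⟨y, hyI, hy⟩ := cdf_ivt T hT1 (c := 4 * γ) (by linarith) (by rw [hmT]; linarith)
  obtain ⟨v, hvI, hv⟩ := cdf_ivt T hT1 (c := 7 * γ) (by linarith) (by rw [hmT]; linarith)
  obtain ⟨b, hbI, hb⟩ := cdf_ivt T hT1 (c := 7 * γ + α) (by linarith) (by rw [hmT]; linarith)
  obtain ⟨b', hb'I, hb'⟩ := cdf_ivt T hT1 (c := β - γ / 2) (by linarith) (by rw [hmT]; linarith)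
  -- orderings
  have haa' : a' < a := cdf_lt S (by rw [ha', ha]; linarith)
  have hau : a < u := cdf_lt S (by rw [ha, hu]; linarith)
  have hux : u < x := cdf_lt S (by rw [hu, hx]; linarith)
  have hyv : y < v := cdf_lt T (by rw [hy, hv]; linarith)
  have hvb : v < b := cdf_lt T (by rw [hv, hb]; linarith)
  have hbb' : b < b' := cdf_lt T (by rw [hb, hb']; linarith)
  -- points of S and T
  obtain ⟨s₀, hs₀S, hs₀x⟩ := cdf_exists_gt S hS1 (t := x) (by rw [hx, hmS]; linarith)
  obtain ⟨t₀, ht₀T, ht₀y⟩ := cdf_exists_le T (t := y) (by rw [hy]; linarith)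
  obtain ⟨s₁, hs₁S, hs₁a'⟩ := cdf_exists_le S (t := a') (by rw [ha']; linarith)
  obtain ⟨t₁, ht₁T, ht₁b'⟩ := cdf_exists_gt T hT1 (t := b') (by rw [hb', hmT]; linarith)
  -- T lies entirely above x
  have hTx : T ∩ Icc 0 x = ∅ := by
    rw [eq_empty_iff_forall_notMem]
    rintro t ⟨htT, -, htx⟩
    have := (hpair s₀ hs₀S t htT).2.1
    linarith
  have hxv : x < v := cdf_lt T (by rw [hv, hTx]; simpa using by linarith)
  have hxb : x < b := cdf_lt T (by rw [hb, hTx]; simpa using by linarith)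
  have hax : a < x := hau.trans hux
  -- δ
  set δ : ℝ := min (min (x - u) (v - y)) (min (a - a') (b' - b)) with hδdef
  have hδ0 : 0 < δ := by
    refine lt_min (lt_min (by linarith) (by linarith)) (lt_min (by linarith) (by linarith))
  have hδxu : δ ≤ x - u := le_trans (min_le_left _ _) (min_le_left _ _)
  have hδvy : δ ≤ v - y := le_trans (min_le_left _ _) (min_le_right _ _)
  have hδaa : δ ≤ a - a' := le_trans (min_le_right _ _) (min_le_left _ _)
  have hδbb : δ ≤ b' - b := le_trans (min_le_right _ _) (min_le_right _ _)
  -- witness sets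
  set S₁ : Set ℝ := S ∩ Ioc a u with hS₁def
  set T₁ : Set ℝ := T ∩ Ioc v b with hT₁def
  have hS₁meas : MeasurableSet S₁ := hS.inter measurableSet_Ioc
  have hT₁meas : MeasurableSet T₁ := hT.inter measurableSet_Ioc
  have hS₁vol : (volume S₁).toReal = α := by
    rw [hS₁def, cdf_slice S hS haI.1 hau.le, hu, ha]; ring
  have hT₁vol : (volume T₁).toReal = α := by
    rw [hT₁def, cdf_slice T hT hvI.1 hvb.le, hb, hv]; ring
  -- point q' in G near (s₀, t₀)
  obtain ⟨q', hq'G, hq'1, hq'2⟩ :=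
    closure_point (hsub (mk_mem_prod hs₀S ht₀T)) hδ0
  obtain ⟨hq'1a, hq'1b⟩ := abs_lt.mp hq'1
  obtain ⟨hq'2a, hq'2b⟩ := abs_lt.mp hq'2
  -- S₁ × T₁ ⊆ UL q'.1 q'.2
  have hUL : S₁ ×ˢ T₁ ⊆ UL q'.1 q'.2 := by
    rintro ⟨p1, p2⟩ ⟨hp1, hp2⟩
    obtain ⟨hp1S, hp1a, hp1u⟩ := hp1
    obtain ⟨hp2T, hp2v, hp2b⟩ := hp2
    exact ⟨⟨(hS1 hp1S).1, by simp only; linarith⟩, ⟨by simp only; linarith, (hT1 hp2T).2⟩⟩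
  -- q' not in B, hence avg is small
  have hq'nB : q' ∉ regionB w α m k := fun h => hq'G.2 (Or.inl h)
  have havg : avgOn w S₁ T₁ ≤ ((k : ℝ) - 1) / m := by
    by_contra hlt
    push_neg at hlt
    exact hq'nB (by
      rw [regionB_eq w α m k hk0 hkm]
      exact ⟨hq'G.1, Or.inr ⟨S₁, T₁, hS₁meas, hT₁meas, hUL, hS₁vol, hT₁vol, hlt⟩⟩)
  -- point q'' in G near (s₁, t₁)
  obtain ⟨q'', hq''G, hq''1, hq''2⟩ :=
    closure_point (hsub (mk_mem_prod hs₁S ht₁T)) hδ0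
  obtain ⟨hq''1a, hq''1b⟩ := abs_lt.mp hq''1
  obtain ⟨hq''2a, hq''2b⟩ := abs_lt.mp hq''2
  -- S₁ × T₁ ⊆ LR q''.1 q''.2
  have hLR : S₁ ×ˢ T₁ ⊆ LR q''.1 q''.2 := by
    rintro ⟨p1, p2⟩ ⟨hp1, hp2⟩
    obtain ⟨hp1S, hp1a, hp1u⟩ := hp1
    obtain ⟨hp2T, hp2v, hp2b⟩ := hp2
    have hple := (hpair p1 hp1S p2 hp2T)
    refine ⟨⟨⟨by simp only; linarith, by simp only; linarith⟩,
      ⟨by simp only; linarith, by simp only; linarith⟩⟩,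
      hple.1, hple.2.1, hple.2.2⟩
  have hq''nB : q'' ∉ regionB w α m k := fun h => hq''G.2 (Or.inl h)
  exact hq''G.2 (Or.inr (by
    rw [regionW_eq w α m k hk0 hkm]
    exact ⟨⟨hq''G.1, hq''nB⟩, S₁, T₁, hS₁meas, hT₁meas, hLR, hS₁vol, hT₁vol, havg⟩))
end
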